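/- arXiv:1408.7110 — 7 statements merged into one kernel-verified Lean document; each statement's English description precedes it below -/
import Mathlib

section
/- For all n ∈ ℕ, n ≥ 1, and all x, y ∈ [-1,1], one has δ_n(y)^2 ≤ 4 δ_n(x) (|x-y| + δ_n(x)), where δ_n(x) := n^{-1}(1-x^2)^{1/2} + n^{-2}. -/
noncomputable def deltan (n : ℕ) (x : ℝ) : ℝ := Real.sqrt (1 - x^2) / n + 1 / (n:ℝ)^2

lemma helper_stmt0 (D E s t u : ℝ) (hD : 0 ≤ D) (ht : 0 ≤ t) (hs : 0 ≤ s) (hu : 0 ≤ u)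
    (h1 : u^2 ≤ D) (h2 : E ≤ D + s*u) (h3 : s^2 = 2*t) (hE : 0 ≤ E) :
    E^2 ≤ 4*D*(t+D) := by
  nlinarith [sq_nonneg (D - s*u), mul_nonneg ht hD, mul_self_le_mul_self hE h2,
    mul_le_mul_of_nonneg_left h1 ht, sq_nonneg D]

theorem stmt0 (n : ℕ) (hn : 1 ≤ n) (x y : ℝ)
    (hx : x ∈ Set.Icc (-1:ℝ) 1) (hy : y ∈ Set.Icc (-1:ℝ) 1) :
    (deltan n y)^2 ≤ 4 * deltan n x * (|x - y| + deltan n x) := by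
  obtain ⟨hx1, hx2⟩ := hx
  obtain ⟨hy1, hy2⟩ := hy
  have hm : (1:ℝ) ≤ (n:ℝ) := by exact_mod_cast hn
  have hm0 : (0:ℝ) < (n:ℝ) := by linarith
  set t := |x - y| with ht
  have ht0 : 0 ≤ t := abs_nonneg _
  have htx : -t ≤ x - y := neg_abs_le _
  have hty : x - y ≤ t := le_abs_self _
  set a := Real.sqrt (1 - x^2) with ha
  set b := Real.sqrt (1 - y^2) with hb
  set s := Real.sqrt (2*t) with hsdef
  have ha0 : 0 ≤ a := Real.sqrt_nonneg _
  have hb0 : 0 ≤ b := Real.sqrt_nonneg _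
  have hs0 : 0 ≤ s := Real.sqrt_nonneg _
  have ha2 : a^2 = 1 - x^2 := Real.sq_sqrt (by nlinarith)
  have hb2 : b^2 = 1 - y^2 := Real.sq_sqrt (by nlinarith)
  have hs2 : s^2 = 2*t := Real.sq_sqrt (by linarith)
  have hba : b ≤ a + s := by
    have h1 : b^2 ≤ (a+s)^2 := by nlinarith
    calc b = Real.sqrt (b^2) := (Real.sqrt_sq hb0).symm
      _ ≤ Real.sqrt ((a+s)^2) := Real.sqrt_le_sqrt h1
      _ = a + s := Real.sqrt_sq (by linarith)
  have hD0 : 0 ≤ deltan n x := by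
    unfold deltan
    positivity
  have hE0 : 0 ≤ deltan n y := by
    unfold deltan
    positivity
  have hu0 : 0 ≤ 1/(n:ℝ) := by positivity
  have h1 : (1/(n:ℝ))^2 ≤ deltan n x := by
    unfold deltan
    rw [← ha]
    have : 0 ≤ a / n := by positivity
    have e : (1/(n:ℝ))^2 = 1/(n:ℝ)^2 := by ring
    linarith [e.le]
  have h2 : deltan n y ≤ deltan n x + s * (1/(n:ℝ)) := by
    unfold deltan
    rw [← ha, ← hb]
    have h3 : b / (n:ℝ) ≤ (a + s) / n := by gcongr
    have e : (a+s)/(n:ℝ) = a/n + s*(1/n) := by ring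
    linarith
  exact helper_stmt0 (deltan n x) (deltan n y) s t (1/(n:ℝ)) hD0 ht0 hs0 hu0 h1 h2 hs2 hE0
end

section
/- Let (x_i)_{i=0}^n be the Chebyshev partition of [-1,1] with I_i = [x_i, x_{i-1}]. Then for every 1 ≤ i ≤ n-1, |I_i|/3 ≤ |I_{i+1}| ≤ 3|I_i|. -/
noncomputable def cheb (n i : ℕ) : ℝ := Real.cos (i * Real.pi / n)

lemma sin_concave_aux (a b : ℝ) (ha : 0 < a) (hab : a ≤ b) (hb : b ≤ Real.pi) :
    a * Real.sin b ≤ b * Real.sin a := by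
  have hbpos : 0 < b := lt_of_lt_of_le ha hab
  have hc := strictConcaveOn_sin_Icc.concaveOn
  have h0 : (0:ℝ) ∈ Set.Icc 0 Real.pi := by
    constructor <;> [rfl; exact Real.pi_pos.le]
  have hbmem : b ∈ Set.Icc 0 Real.pi := ⟨hbpos.le, hb⟩
  have ht0 : 0 ≤ a / b := by positivity
  have ht1 : a / b ≤ 1 := by
    rw [div_le_one hbpos]; exact hab
  have := hc.2 h0 hbmem (by linarith : (0:ℝ) ≤ 1 - a/b) ht0 (by ring)
  simp only [smul_eq_mul, mul_zero, Real.sin_zero, zero_add] at this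
  have hab' : a / b * b = a := div_mul_cancel₀ a hbpos.ne'
  rw [hab'] at this
  calc a * Real.sin b = b * (a / b * Real.sin b) := by field_simp
    _ ≤ b * Real.sin a := by
        apply mul_le_mul_of_nonneg_left _ hbpos.le
        linarith

lemma sin_le_three (a b : ℝ) (ha : 0 < a) (hab : a ≤ b) (hb : b ≤ Real.pi)
    (h3 : b ≤ 3 * a) : Real.sin b ≤ 3 * Real.sin a := by
  have h1 := sin_concave_aux a b ha hab hb
  have hsa : 0 ≤ Real.sin a :=
    Real.sin_nonneg_of_nonneg_of_le_pi ha.le (hab.trans hb)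
  nlinarith

theorem stmt2 (n : ℕ) (hn : 1 ≤ n) (i : ℕ) (hi1 : 1 ≤ i) (hin : i ≤ n - 1) :
    (cheb n (i-1) - cheb n i) / 3 ≤ cheb n i - cheb n (i+1) ∧
      cheb n i - cheb n (i+1) ≤ 3 * (cheb n (i-1) - cheb n i) := by
  have hN : (0:ℝ) < n := by exact_mod_cast hn
  have hk1 : (1:ℝ) ≤ (i:ℝ) := by exact_mod_cast hi1
  have hkn : (i:ℝ) + 1 ≤ (n:ℝ) := by
    have : i + 1 ≤ n := by omega
    exact_mod_cast this
  set θ := Real.pi / (2 * n) with hθ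
  have hθpos : 0 < θ := by positivity
  have hpi := Real.pi_pos
  have key1 : cheb n (i-1) - cheb n i
      = 2 * Real.sin ((2*(i:ℝ)-1)*θ) * Real.sin θ := by
    unfold cheb
    rw [Real.cos_sub_cos]
    have e1 : ((((i-1:ℕ):ℝ)) * Real.pi / n + (i:ℝ) * Real.pi / n) / 2
        = (2*(i:ℝ)-1)*θ := by
      rw [Nat.cast_sub hi1, hθ]; push_cast; field_simp; ring
    have e2 : ((((i-1:ℕ):ℝ)) * Real.pi / n - (i:ℝ) * Real.pi / n) / 2 = -θ := by
      rw [Nat.cast_sub hi1, hθ]; push_cast; field_simp; ring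
    rw [e1, e2, Real.sin_neg]; ring
  have key2 : cheb n i - cheb n (i+1)
      = 2 * Real.sin ((2*(i:ℝ)+1)*θ) * Real.sin θ := by
    unfold cheb
    rw [Real.cos_sub_cos]
    have e1 : ((i:ℝ) * Real.pi / n + ((i+1:ℕ):ℝ) * Real.pi / n) / 2
        = (2*(i:ℝ)+1)*θ := by
      rw [hθ]; push_cast; field_simp; ring
    have e2 : ((i:ℝ) * Real.pi / n - ((i+1:ℕ):ℝ) * Real.pi / n) / 2 = -θ := by
      rw [hθ]; push_cast; field_simp; ring
    rw [e1, e2, Real.sin_neg]; ring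
  set a := (2*(i:ℝ)-1)*θ with haa
  set b := (2*(i:ℝ)+1)*θ with hbb
  have hapos : 0 < a := by
    apply mul_pos _ hθpos; linarith
  have hab : a ≤ b := by
    apply mul_le_mul_of_nonneg_right _ hθpos.le; linarith
  have hbpi : b < Real.pi := by
    rw [hbb, hθ]
    calc (2*(i:ℝ)+1) * (Real.pi / (2*n)) = ((2*(i:ℝ)+1)/(2*n)) * Real.pi := by ring
      _ < 1 * Real.pi := by
          apply mul_lt_mul_of_pos_right _ hpi
          rw [div_lt_one (by positivity)]; linarith
      _ = Real.pi := one_mul _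
  have hsθ : 0 < Real.sin θ := by
    apply Real.sin_pos_of_pos_of_lt_pi hθpos
    calc θ = (1/(2*n)) * Real.pi := by rw [hθ]; ring
      _ < 1 * Real.pi := by
          apply mul_lt_mul_of_pos_right _ hpi
          rw [div_lt_one (by positivity)]; linarith
      _ = Real.pi := one_mul _
  -- upper bound: sin b ≤ 3 sin a
  have hub : Real.sin b ≤ 3 * Real.sin a := by
    apply sin_le_three a b hapos hab hbpi.le
    rw [haa, hbb]; nlinarith
  -- lower bound: sin a ≤ 3 sin b, via sin(π - x)
  have hlb : Real.sin a ≤ 3 * Real.sin b := by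
    have h1 : Real.sin a = Real.sin (Real.pi - a) := (Real.sin_pi_sub a).symm
    have h2 : Real.sin b = Real.sin (Real.pi - b) := (Real.sin_pi_sub b).symm
    rw [h1, h2]
    apply sin_le_three (Real.pi - b) (Real.pi - a) (by linarith) (by linarith)
      (by linarith)
    -- π - a ≤ 3(π - b) ↔ 3b - a ≤ 2π ↔ (4i+4)θ ≤ 2π
    have h4 : 3*b - a = (4*(i:ℝ)+4)*θ := by rw [haa, hbb]; ring
    have h5 : (4*(i:ℝ)+4)*θ ≤ 2*Real.pi := by
      rw [hθ]
      calc (4*(i:ℝ)+4) * (Real.pi/(2*n)) = ((2*(i:ℝ)+2)/n) * Real.pi := by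
            field_simp; ring
        _ ≤ 2 * Real.pi := by
            apply mul_le_mul_of_nonneg_right _ hpi.le
            rw [div_le_iff₀ hN]; linarith
    linarith
  constructor
  · rw [key1, key2]
    nlinarith
  · rw [key1, key2]
    nlinarith
end

section
/- Let (x_i)_{i=0}^n be the Chebyshev partition of [-1,1], I_i = [x_i, x_{i-1}], and define ψ_i(x) = |I_i|/(|x - x_i| + |I_i|). Then for every real α ≥ 2 there is a constant c (independent of n and x) such that ∑_{i=1}^n ψ_i(x)^α ≤ c for all x ∈ [-1,1]. -/
noncomputable def psi (n i : ℕ) (x : ℝ) : ℝ :=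
  (cheb n (i-1) - cheb n i) / (|x - cheb n i| + (cheb n (i-1) - cheb n i))

open Real in

lemma star_ineq (s δ σ m : ℝ) (hs : 0 < s) (hs2 : s ≤ π/2)
    (hd0 : 0 ≤ δ) (hd2 : δ ≤ π/2) (hss : Real.sin δ ≤ Real.sin σ)
    (hm0 : 0 ≤ Real.sin m) (hms : |m - σ| ≤ s + δ) :
    δ * Real.sin m ≤ 7 * (Real.sin σ * Real.sin δ + Real.sin m * Real.sin s) := by
  have hsd : 0 ≤ Real.sin δ := Real.sin_nonneg_of_nonneg_of_le_pi hd0 (by linarith [Real.pi_pos])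
  have hss0 : 0 ≤ Real.sin s := Real.sin_nonneg_of_nonneg_of_le_pi hs.le (by linarith [Real.pi_pos])
  have hσ0 : 0 ≤ Real.sin σ := le_trans hsd hss
  have hsinS : 2/π * s ≤ Real.sin s := Real.mul_le_sin hs.le hs2
  have hpi : 3.14 < π := Real.pi_gt_d2
  have hpi2 : π < 3.15 := Real.pi_lt_d2
  have hprod : 0 ≤ Real.sin σ * Real.sin δ := mul_nonneg hσ0 hsd
  rcases le_or_gt δ (2*s) with hc | hc
  · have e1 : δ * Real.sin m ≤ 2*s*Real.sin m := mul_le_mul_of_nonneg_right hc hm0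
    have e2 : 2/π * s * Real.sin m ≤ Real.sin s * Real.sin m :=
      mul_le_mul_of_nonneg_right hsinS hm0
    have e3 : 2*s*Real.sin m ≤ π*(Real.sin s * Real.sin m) := by
      have h := mul_le_mul_of_nonneg_left e2 Real.pi_pos.le
      have hπ : π ≠ 0 := Real.pi_ne_zero
      calc 2*s*Real.sin m = π * (2/π * s * Real.sin m) := by field_simp
        _ ≤ π*(Real.sin s * Real.sin m) := h
    have e4 : 0 ≤ Real.sin s * Real.sin m := mul_nonneg hss0 hm0
    nlinarith [e1, e3, e4]
  · -- δ > 2s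
    have hsinD : 2/π * δ ≤ Real.sin δ := Real.mul_le_sin hd0 hd2
    have hδle : δ ≤ (π/2) * Real.sin δ := by
      have h := mul_le_mul_of_nonneg_left hsinD (by positivity : (0:ℝ) ≤ π/2)
      calc δ = π/2 * (2/π * δ) := by field_simp
        _ ≤ _ := h
    have hlip : |Real.sin m - Real.sin σ| ≤ |m - σ| := by
      rw [Real.sin_sub_sin]
      have hA : |Real.sin ((m-σ)/2)| ≤ |(m-σ)/2| := Real.abs_sin_le_abs
      have hB : |Real.cos ((m+σ)/2)| ≤ 1 := Real.abs_cos_le_one _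
      calc |2 * Real.sin ((m - σ)/2) * Real.cos ((m + σ)/2)|
          = 2 * |Real.sin ((m - σ)/2)| * |Real.cos ((m + σ)/2)| := by
            rw [abs_mul, abs_mul, abs_two]
        _ ≤ 2 * |(m-σ)/2| * 1 :=
            mul_le_mul (mul_le_mul_of_nonneg_left hA (by norm_num)) hB (abs_nonneg _)
              (by positivity)
        _ = |m - σ| := by rw [abs_div, abs_two]; ring
    have h1 : Real.sin m ≤ Real.sin σ + (s + δ) := by
      have := abs_le.mp (hlip.trans hms)
      linarith [this.1, this.2]
    set Y := Real.sin δ * Real.sin σ with hY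
    set Z := Real.sin δ * Real.sin δ with hZ
    have b5 : 0 ≤ Y := mul_nonneg hsd hσ0
    have bz : 0 ≤ Z := mul_nonneg hsd hsd
    have b1 : δ * Real.sin m ≤ δ * Real.sin σ + (3/2) * (δ * δ) := by
      nlinarith [mul_le_mul_of_nonneg_left h1 hd0]
    have b2 : δ * Real.sin σ ≤ (π/2) * Y := by
      calc δ * Real.sin σ ≤ ((π/2) * Real.sin δ) * Real.sin σ :=
            mul_le_mul_of_nonneg_right hδle hσ0
        _ = (π/2) * Y := by rw [hY]; ring
    have b3 : δ*δ ≤ (π/2)^2 * Z := by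
      calc δ*δ ≤ ((π/2) * Real.sin δ) * ((π/2) * Real.sin δ) :=
            mul_le_mul hδle hδle hd0 (by positivity)
        _ = (π/2)^2 * Z := by rw [hZ]; ring
    have b4 : Z ≤ Y := mul_le_mul_of_nonneg_left hss hsd
    have c2 : (π/2) * Y ≤ 1.575 * Y := mul_le_mul_of_nonneg_right (by linarith) b5
    have c3 : (π/2)^2 * Z ≤ 2.49 * Z := by
      have : (π/2)^2 ≤ 2.49 := by nlinarith
      exact mul_le_mul_of_nonneg_right this bz
    have key : δ * Real.sin m ≤ 7 * (Real.sin σ * Real.sin δ) := by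
      have : Real.sin σ * Real.sin δ = Y := by rw [hY]; ring
      rw [this]
      linarith [b1, b2, b3, b4, c2, c3, b5]
    linarith [key, mul_nonneg hm0 hss0]


lemma basel (N : ℕ) : ∑ k ∈ Finset.Icc 1 N, (1:ℝ)/(k:ℝ)^2 ≤ 2 - 2/(N+1) := by
  induction N with
  | zero => simp
  | succ N ih =>
    rw [Finset.sum_Icc_succ_top (by omega : 1 ≤ N+1)]
    have h1 : (0:ℝ) < N+1 := by positivity
    have h2 : (0:ℝ) < N+2 := by positivity
    have : ((N+1:ℕ):ℝ) = (N:ℝ)+1 := by push_cast; ring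
    rw [this]
    have key : (1:ℝ)/((N:ℝ)+1)^2 + 2/((N:ℝ)+2) ≤ 2/((N:ℝ)+1) := by
      rw [div_add_div _ _ (by positivity) (by positivity), div_le_div_iff₀ (by positivity) h1]
      ring_nf
      nlinarith [sq_nonneg ((N:ℝ)+1)]
    push_cast
    have e : 2/((N:ℝ)+1+1) = 2/((N:ℝ)+2) := by rw [show ((N:ℝ)+1+1) = (N:ℝ)+2 from by ring]
    linarith [ih]

lemma basel2 (N : ℕ) : ∑ k ∈ Finset.Icc 1 N, (1:ℝ)/(k:ℝ)^2 ≤ 2 := by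
  have := basel N
  have : (0:ℝ) < (N:ℝ)+1 := by positivity
  have h2 : (0:ℝ) ≤ 2/((N:ℝ)+1) := by positivity
  linarith [basel N]

lemma sum_inv_sq_shift (n : ℕ) (y : ℝ) (hy0 : 0 ≤ y) (hyn : y ≤ n) :
    ∑ i ∈ Finset.Icc 1 n, (1:ℝ)/(1+|y-(i:ℝ)|)^2 ≤ 4 := by
  set j := ⌊y⌋₊ with hj
  have hjy : (j:ℝ) ≤ y := Nat.floor_le hy0
  have hyj : y < (j:ℝ) + 1 := Nat.lt_floor_add_one y
  have hjn : j ≤ n := by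
    have := Nat.floor_le_floor hyn
    simpa using this
  rw [← Finset.sum_filter_add_sum_filter_not (Finset.Icc 1 n) (fun i : ℕ => (i:ℝ) ≤ y)]
  have part1 : ∑ i ∈ (Finset.Icc 1 n).filter (fun i : ℕ => (i:ℝ) ≤ y),
      (1:ℝ)/(1+|y-(i:ℝ)|)^2 ≤ 2 := by
    have sub1 : (Finset.Icc 1 n).filter (fun i : ℕ => (i:ℝ) ≤ y) ⊆ Finset.Icc 1 j := by
      intro i hi
      simp only [Finset.mem_filter, Finset.mem_Icc] at hi ⊢
      exact ⟨hi.1.1, Nat.le_floor hi.2⟩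
    calc ∑ i ∈ (Finset.Icc 1 n).filter (fun i : ℕ => (i:ℝ) ≤ y), (1:ℝ)/(1+|y-(i:ℝ)|)^2
        ≤ ∑ i ∈ (Finset.Icc 1 n).filter (fun i : ℕ => (i:ℝ) ≤ y), (1:ℝ)/((j+1-i:ℕ):ℝ)^2 := by
          apply Finset.sum_le_sum
          intro i hi
          have hij : i ≤ j := (Finset.mem_Icc.mp (sub1 hi)).2
          have hiy : (i:ℝ) ≤ y := (Finset.mem_filter.mp hi).2
          have hc : ((j+1-i:ℕ):ℝ) = (j:ℝ)+1-(i:ℝ) := by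
            have : i ≤ j+1 := by omega
            push_cast [this]; ring
          have habs : |y-(i:ℝ)| = y - i := abs_of_nonneg (by linarith)
          have hb : ((j+1-i:ℕ):ℝ) ≤ 1+|y-(i:ℝ)| := by rw [hc, habs]; linarith
          have hbpos : (0:ℝ) < ((j+1-i:ℕ):ℝ) := by rw [hc]; push_cast; linarith
          gcongr
      _ ≤ ∑ i ∈ Finset.Icc 1 j, (1:ℝ)/((j+1-i:ℕ):ℝ)^2 := by
          apply Finset.sum_le_sum_of_subset_of_nonneg sub1
          intro i _ _; positivity
      _ = ∑ k ∈ Finset.Icc 1 j, (1:ℝ)/(k:ℝ)^2 := by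
          apply Finset.sum_nbij' (fun i => j+1-i) (fun k => j+1-k)
          · intro a ha; simp only [Finset.mem_Icc] at ha ⊢; omega
          · intro a ha; simp only [Finset.mem_Icc] at ha ⊢; omega
          · intro a ha; simp only [Finset.mem_Icc] at ha; omega
          · intro a ha; simp only [Finset.mem_Icc] at ha; omega
          · intro a ha; rfl
      _ ≤ 2 := basel2 j
  have part2 : ∑ i ∈ (Finset.Icc 1 n).filter (fun i : ℕ => ¬((i:ℝ) ≤ y)),
      (1:ℝ)/(1+|y-(i:ℝ)|)^2 ≤ 2 := by
    have sub2 : (Finset.Icc 1 n).filter (fun i : ℕ => ¬((i:ℝ) ≤ y)) ⊆ Finset.Icc (j+1) n := by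
      intro i hi
      simp only [Finset.mem_filter, Finset.mem_Icc, not_le] at hi ⊢
      refine ⟨?_, hi.1.2⟩
      by_contra hcon
      push_neg at hcon
      have : (i:ℝ) ≤ (j:ℝ) := by exact_mod_cast Nat.lt_succ_iff.mp hcon
      linarith [hi.2]
    calc ∑ i ∈ (Finset.Icc 1 n).filter (fun i : ℕ => ¬((i:ℝ) ≤ y)), (1:ℝ)/(1+|y-(i:ℝ)|)^2
        ≤ ∑ i ∈ (Finset.Icc 1 n).filter (fun i : ℕ => ¬((i:ℝ) ≤ y)), (1:ℝ)/((i-j:ℕ):ℝ)^2 := by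
          apply Finset.sum_le_sum
          intro i hi
          have hij : j+1 ≤ i := (Finset.mem_Icc.mp (sub2 hi)).1
          have hiy : y < (i:ℝ) := lt_of_not_ge (Finset.mem_filter.mp hi).2
          have hc : ((i-j:ℕ):ℝ) = (i:ℝ)-(j:ℝ) := by
            have : j ≤ i := by omega
            push_cast [this]; ring
          have habs : |y-(i:ℝ)| = (i:ℝ) - y := by
            rw [abs_sub_comm]; exact abs_of_nonneg (by linarith)
          have hb : ((i-j:ℕ):ℝ) ≤ 1+|y-(i:ℝ)| := by rw [hc, habs]; linarith
          have hbpos : (0:ℝ) < ((i-j:ℕ):ℝ) := by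
            rw [hc]
            have : ((j:ℝ))+1 ≤ (i:ℝ) := by exact_mod_cast hij
            linarith
          gcongr
      _ ≤ ∑ i ∈ Finset.Icc (j+1) n, (1:ℝ)/((i-j:ℕ):ℝ)^2 := by
          apply Finset.sum_le_sum_of_subset_of_nonneg sub2
          intro i _ _; positivity
      _ = ∑ k ∈ Finset.Icc 1 (n-j), (1:ℝ)/(k:ℝ)^2 := by
          apply Finset.sum_nbij' (fun i => i-j) (fun k => k+j)
          · intro a ha; simp only [Finset.mem_Icc] at ha ⊢; omega
          · intro a ha; simp only [Finset.mem_Icc] at ha ⊢; omega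
          · intro a ha; simp only [Finset.mem_Icc] at ha; omega
          · intro a ha; simp only [Finset.mem_Icc] at ha; omega
          · intro a ha; rfl
      _ ≤ 2 := basel2 _
  linarith

open Real in
set_option maxHeartbeats 1000000 in
lemma psi_bound (n i : ℕ) (hn : 1 ≤ n) (hi1 : 1 ≤ i) (hin : i ≤ n) (θ : ℝ)
    (hθ0 : 0 ≤ θ) (hθπ : θ ≤ π) :
    psi n i (Real.cos θ) ≤ 8 / (1 + |θ*(n:ℝ)/π - (i:ℝ)|) := by
  have hπ : (0:ℝ) < π := Real.pi_pos
  have hn0 : (0:ℝ) < (n:ℝ) := by exact_mod_cast hn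
  have hin' : (i:ℝ) ≤ (n:ℝ) := by exact_mod_cast hin
  have hi1' : (1:ℝ) ≤ (i:ℝ) := by exact_mod_cast hi1
  set s : ℝ := π/(2*n) with hsdef
  set t : ℝ := (i:ℝ)*π/(n:ℝ) with htdef
  set m : ℝ := t - s with hmdef
  set σ : ℝ := (θ+t)/2 with hσdef
  set δ : ℝ := |θ-t|/2 with hδdef
  have hs : 0 < s := by positivity
  have hs2 : s ≤ π/2 := by
    rw [hsdef, div_le_div_iff₀ (by positivity) two_pos]
    nlinarith
  have ht0 : 0 ≤ t := by positivity
  have htπ : t ≤ π := by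
    rw [htdef, div_le_iff₀ hn0]
    nlinarith
  have ht2s : 2*s ≤ t := by
    have e : t - 2*s = ((i:ℝ)-1)*π/(n:ℝ) := by rw [htdef, hsdef]; field_simp
    have h0 : 0 ≤ ((i:ℝ)-1)*π/(n:ℝ) := by
      apply div_nonneg _ hn0.le
      nlinarith
    linarith
  have hm0 : 0 < m := by rw [hmdef]; linarith
  have hmπ : m < π := by rw [hmdef]; linarith
  have hsinm : 0 < Real.sin m := Real.sin_pos_of_pos_of_lt_pi hm0 hmπ
  have hd0 : 0 ≤ δ := by rw [hδdef]; positivity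
  have hd2 : δ ≤ π/2 := by
    rw [hδdef]
    have : |θ - t| ≤ π := abs_le.mpr ⟨by linarith, by linarith⟩
    linarith
  have hσ0 : 0 ≤ σ := by rw [hσdef]; linarith
  have hσπ : σ ≤ π := by rw [hσdef]; linarith
  have hsinσ0 : 0 ≤ Real.sin σ := Real.sin_nonneg_of_nonneg_of_le_pi hσ0 hσπ
  have habs := abs_cases (θ - t)
  have hσδπ : σ + δ ≤ π := by
    rcases habs with ⟨h1, _⟩ | ⟨h1, _⟩ <;> rw [hσdef, hδdef] <;> rw [h1] <;> linarith
  have hσδ0 : 0 ≤ σ - δ := by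
    rcases habs with ⟨h1, _⟩ | ⟨h1, _⟩ <;> rw [hσdef, hδdef] <;> rw [h1] <;> linarith
  have hss : Real.sin δ ≤ Real.sin σ := by
    rw [← sub_nonneg, Real.sin_sub_sin]
    apply mul_nonneg (mul_nonneg (by norm_num) ?_) ?_
    · apply Real.sin_nonneg_of_nonneg_of_le_pi <;> [linarith; linarith]
    · apply Real.cos_nonneg_of_mem_Icc; constructor <;> [linarith; linarith]
  have hms : |m - σ| ≤ s + δ := by
    have : m - σ = (t - θ)/2 - s := by rw [hmdef, hσdef]; ring
    rw [this]
    have h1 : |(t - θ)/2 - s| ≤ |(t-θ)/2| + |s| := abs_sub _ _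
    have h2 : |(t-θ)/2| = δ := by rw [hδdef, abs_div, abs_sub_comm θ t]; norm_num
    rw [abs_of_pos hs] at h1
    linarith [h1, h2.le, h2.ge]
  have hstar := star_ineq s δ σ m hs hs2 hd0 hd2 hss hsinm.le hms
  -- h and D
  set h : ℝ := 2 * Real.sin m * Real.sin s with hhdef
  have hh0 : 0 < h := by
    have := Real.sin_pos_of_pos_of_lt_pi hs (by linarith)
    positivity
  have hH : cheb n (i-1) - cheb n i = h := by
    have hcast : ((i-1:ℕ):ℝ) = (i:ℝ) - 1 := by
      have : 1 ≤ i := hi1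
      push_cast [this]; ring
    rw [cheb, cheb, hcast, Real.cos_sub_cos]
    have e1 : (((i:ℝ)-1)*π/n + (i:ℝ)*π/n)/2 = m := by
      rw [hmdef, htdef, hsdef]; field_simp; ring
    have e2 : (((i:ℝ)-1)*π/n - (i:ℝ)*π/n)/2 = -s := by
      rw [hsdef]; field_simp; ring
    rw [e1, e2, Real.sin_neg, hhdef]; ring
  set D : ℝ := |Real.cos θ - Real.cos t| with hDdef
  have hD : 2 * Real.sin σ * Real.sin δ ≤ D := by
    rw [hDdef, Real.cos_sub_cos]
    have : |(-2) * Real.sin ((θ+t)/2) * Real.sin ((θ-t)/2)|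
        = 2 * Real.sin σ * |Real.sin ((θ-t)/2)| := by
      rw [abs_mul, abs_mul, abs_neg, abs_two, abs_of_nonneg (by rw [← hσdef]; exact hsinσ0)]
    rw [this]
    have hsd : Real.sin δ ≤ |Real.sin ((θ-t)/2)| := by
      rcases le_total t θ with hc | hc
      · have : δ = (θ-t)/2 := by rw [hδdef, abs_of_nonneg (by linarith)]
        rw [this]; exact le_abs_self _
      · have he : δ = -((θ-t)/2) := by rw [hδdef, abs_of_nonpos (by linarith)]; ring
        rw [he, Real.sin_neg]
        exact neg_le_abs _
    calc 2 * Real.sin σ * Real.sin δ ≤ 2 * Real.sin σ * |Real.sin ((θ-t)/2)| := by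
          apply mul_le_mul_of_nonneg_left hsd (by positivity)
      _ = _ := rfl
  -- rewrite psi
  have hpsi : psi n i (Real.cos θ) = h / (D + h) := by
    rw [psi, hH, hDdef]
    have : cheb n i = Real.cos t := by rw [cheb, htdef]
    rw [this]
  rw [hpsi]
  -- d = δ/s
  set d : ℝ := |θ*(n:ℝ)/π - (i:ℝ)| with hddef
  have hd : d = δ / s := by
    have e : θ*(n:ℝ)/π - (i:ℝ) = (θ - t) * ((n:ℝ)/π) := by
      rw [htdef]; field_simp
    rw [hddef, e, abs_mul, abs_of_nonneg (by positivity : (0:ℝ) ≤ (n:ℝ)/π)]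
    rw [hδdef, hsdef]
    field_simp
  have hdnn : 0 ≤ d := abs_nonneg _
  have hD0 : 0 ≤ D := abs_nonneg _
  rw [div_le_div_iff₀ (by linarith) (by linarith)]
  -- goal : h * (1 + d) ≤ 8 * (D + h)
  have k1 : h * d ≤ 2 * Real.sin m * δ := by
    rw [hd, hhdef]
    have hsin_le : Real.sin s ≤ s := Real.sin_le hs.le
    have : Real.sin s * (δ/s) ≤ s * (δ/s) := mul_le_mul_of_nonneg_right hsin_le (by positivity)
    have e : s * (δ/s) = δ := by field_simp
    calc 2 * Real.sin m * Real.sin s * (δ/s) = 2 * Real.sin m * (Real.sin s * (δ/s)) := by ring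
      _ ≤ 2 * Real.sin m * (s * (δ/s)) := mul_le_mul_of_nonneg_left this (by positivity)
      _ = 2 * Real.sin m * δ := by rw [e]
  have k2 : h * d ≤ 7*D + 7*h := by nlinarith [k1, hstar, hD]
  nlinarith [k2, hh0, hD0]

lemma psi_pos_le_one (n i : ℕ) (hn : 1 ≤ n) (hi1 : 1 ≤ i) (hin : i ≤ n) (x : ℝ) :
    0 < psi n i x ∧ psi n i x ≤ 1 := by
  have hπ : (0:ℝ) < Real.pi := Real.pi_pos
  have hn0 : (0:ℝ) < (n:ℝ) := by exact_mod_cast hn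
  have hi1' : (1:ℝ) ≤ (i:ℝ) := by exact_mod_cast hi1
  have hin' : (i:ℝ) ≤ (n:ℝ) := by exact_mod_cast hin
  have hcast : ((i-1:ℕ):ℝ) = (i:ℝ) - 1 := by push_cast [hi1]; ring
  have hlt : Real.cos ((i:ℝ)*Real.pi/(n:ℝ)) < Real.cos (((i:ℝ)-1)*Real.pi/(n:ℝ)) := by
    apply Real.cos_lt_cos_of_nonneg_of_le_pi
    · apply div_nonneg _ hn0.le
      nlinarith
    · rw [div_le_iff₀ hn0]; nlinarith
    · rw [div_lt_div_iff₀ hn0 hn0]; nlinarith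
  have hh : 0 < cheb n (i-1) - cheb n i := by
    rw [cheb, cheb, hcast]
    linarith
  have hden : 0 < |x - cheb n i| + (cheb n (i-1) - cheb n i) := by
    have := abs_nonneg (x - cheb n i)
    linarith
  constructor
  · exact div_pos hh hden
  · rw [psi, div_le_one hden]
    have := abs_nonneg (x - cheb n i)
    linarith

theorem stmt3 (α : ℝ) (hα : 2 ≤ α) :
    ∃ c : ℝ, 0 < c ∧ ∀ n : ℕ, 1 ≤ n → ∀ x ∈ Set.Icc (-1:ℝ) 1,
      ∑ i ∈ Finset.Icc 1 n, (psi n i x) ^ α ≤ c := by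
  refine ⟨256, by norm_num, ?_⟩
  intro n hn x hx
  have hπ : (0:ℝ) < Real.pi := Real.pi_pos
  have hn0 : (0:ℝ) < (n:ℝ) := by exact_mod_cast hn
  set θ : ℝ := Real.arccos x with hθdef
  have hθ0 : 0 ≤ θ := Real.arccos_nonneg x
  have hθπ : θ ≤ Real.pi := Real.arccos_le_pi x
  have hcos : Real.cos θ = x := Real.cos_arccos hx.1 hx.2
  set y : ℝ := θ*(n:ℝ)/Real.pi with hydef
  have hy0 : 0 ≤ y := by positivity
  have hyn : y ≤ (n:ℝ) := by
    rw [hydef, div_le_iff₀ hπ]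
    nlinarith
  have key : ∀ i ∈ Finset.Icc 1 n, (psi n i x) ^ α ≤ 64 * ((1:ℝ)/(1+|y-(i:ℝ)|)^2) := by
    intro i hi
    rw [Finset.mem_Icc] at hi
    obtain ⟨hψ0, hψ1⟩ := psi_pos_le_one n i hn hi.1 hi.2 x
    have hb := psi_bound n i hn hi.1 hi.2 θ hθ0 hθπ
    rw [hcos] at hb
    have step1 : (psi n i x) ^ α ≤ (psi n i x) ^ (2:ℝ) :=
      Real.rpow_le_rpow_of_exponent_ge hψ0 hψ1 hα
    have step2 : (psi n i x) ^ (2:ℝ) = (psi n i x) ^ (2:ℕ) := by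
      rw [← Real.rpow_natCast (psi n i x) 2]
      norm_num
    have hden : (0:ℝ) < 1 + |y-(i:ℝ)| := by positivity
    have step3 : (psi n i x) ^ (2:ℕ) ≤ (8/(1+|y-(i:ℝ)|)) ^ (2:ℕ) :=
      pow_le_pow_left₀ hψ0.le hb 2
    have step4 : (8/(1+|y-(i:ℝ)|)) ^ (2:ℕ) = 64 * ((1:ℝ)/(1+|y-(i:ℝ)|)^2) := by
      rw [div_pow, one_div, ← div_eq_mul_inv]
      norm_num
    calc (psi n i x) ^ α ≤ (psi n i x) ^ (2:ℝ) := step1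
      _ = (psi n i x) ^ (2:ℕ) := step2
      _ ≤ (8/(1+|y-(i:ℝ)|)) ^ (2:ℕ) := step3
      _ = 64 * ((1:ℝ)/(1+|y-(i:ℝ)|)^2) := step4
  calc ∑ i ∈ Finset.Icc 1 n, (psi n i x) ^ α
      ≤ ∑ i ∈ Finset.Icc 1 n, 64 * ((1:ℝ)/(1+|y-(i:ℝ)|)^2) := Finset.sum_le_sum key
    _ = 64 * ∑ i ∈ Finset.Icc 1 n, (1:ℝ)/(1+|y-(i:ℝ)|)^2 := by rw [Finset.mul_sum]
    _ ≤ 64 * 4 := by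
        have := sum_inv_sq_shift n y hy0 hyn
        linarith
    _ = 256 := by norm_num
end

section
/- Let n ∈ ℕ and suppose that for some 1 ≤ μ ≤ n the Chebyshev-partition interval I_μ is contained in an interval J ⊂ [-1,1] with |J| ≤ c₀|I_μ|. Then there is m ∈ ℕ depending only on c₀ (one may take m = ⌊400 c₀⌋ + 2) such that J has nonempty intersection with at most m of the intervals I_i, 1 ≤ i ≤ n. -/
open Real Finset

lemma chord {s t : ℝ} (hs : 0 ≤ s) (hst : s ≤ t) (ht : t ≤ π) :
    s * Real.sin t ≤ t * Real.sin s := by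
  rcases eq_or_lt_of_le (hs.trans hst) with h | h
  · have : s = 0 := le_antisymm (h ▸ hst) hs
    simp [this, ← h]
  · have hc0 : 0 ≤ s / t := div_nonneg hs h.le
    have hc1 : 0 ≤ 1 - s / t := by
      have : s / t ≤ 1 := (div_le_one h).2 hst
      linarith
    have key := strictConcaveOn_sin_Icc.concaveOn.2 (x := 0) (y := t)
      ⟨le_rfl, pi_pos.le⟩ ⟨(hs.trans hst), ht⟩ hc1 hc0 (by ring)
    simp only [smul_eq_mul, mul_zero, Real.sin_zero, zero_add, mul_zero] at key
    have harg : s / t * t = s := div_mul_cancel₀ s h.ne'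
    rw [harg] at key
    calc s * Real.sin t = t * (s / t * Real.sin t) := by field_simp
    _ ≤ t * Real.sin s := by
        apply mul_le_mul_of_nonneg_left _ (hs.trans hst)
        linarith [key]

lemma gaussAux (T h : ℝ) (s : ℕ) :
    ∑ j ∈ Finset.range s, (T - ((j:ℕ)+1)*h) = s*T - s*(s+1)/2*h := by
  induction s with
  | zero => simp
  | succ k ih => rw [Finset.sum_range_succ, ih]; push_cast; ring

lemma genSum (h T : ℝ) (s : ℕ) (hh : 0 < h) (hT : (s:ℝ)*h + h/2 ≤ T) (hTpi : T ≤ π) :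
    (s:ℝ) * Real.sin T ≤ 3 * ∑ j ∈ Finset.range s, Real.sin (T - ((j:ℕ)+1)*h) := by
  have hs0 : (0:ℝ) ≤ s := Nat.cast_nonneg s
  have hTpos : 0 < T := lt_of_lt_of_le (by positivity) hT
  have hterm : ∀ j ∈ Finset.range s, (0:ℝ) ≤ T - ((j:ℕ)+1)*h := by
    intro j hj
    have hj' : (j:ℝ) + 1 ≤ s := by exact_mod_cast Finset.mem_range.1 hj
    nlinarith [mul_le_mul_of_nonneg_right hj' hh.le]
  have hS0 : (0:ℝ) ≤ ∑ j ∈ Finset.range s, Real.sin (T - ((j:ℕ)+1)*h) := by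
    apply Finset.sum_nonneg
    intro j hj
    apply Real.sin_nonneg_of_nonneg_of_le_pi (hterm j hj)
    nlinarith [hterm j hj, hh]
  have hsum : (∑ j ∈ Finset.range s, (T - ((j:ℕ)+1)*h)) * Real.sin T
      ≤ T * ∑ j ∈ Finset.range s, Real.sin (T - ((j:ℕ)+1)*h) := by
    rw [Finset.sum_mul, Finset.mul_sum]
    apply Finset.sum_le_sum
    intro j hj
    exact chord (hterm j hj) (by nlinarith [hterm j hj, hh]) hTpi
  rw [gaussAux] at hsum
  have hsinT : 0 ≤ Real.sin T := Real.sin_nonneg_of_nonneg_of_le_pi hTpos.le hTpi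
  have hss : (s:ℝ) ≤ (s:ℝ)*(s:ℝ) := by
    rcases Nat.eq_zero_or_pos s with h0 | h1
    · simp [h0]
    · have : (1:ℝ) ≤ s := by exact_mod_cast h1
      nlinarith
  have h3A : (s:ℝ)*T ≤ 3*((s:ℝ)*T - s*(s+1)/2*h) := by
    nlinarith [mul_le_mul_of_nonneg_left hT hs0, mul_nonneg hs0 hh.le]
  nlinarith [mul_le_mul_of_nonneg_right h3A hsinT, mul_le_mul_of_nonneg_left hsum (by norm_num : (0:ℝ) ≤ 3)]

lemma lenEq (n i : ℕ) (hn : 1 ≤ n) (hi : 1 ≤ i) :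
    cheb n (i-1) - cheb n i
      = 2 * Real.sin (π/(2*n)) * Real.sin ((2*(i:ℝ)-1)*π/(2*n)) := by
  unfold cheb
  have hn0 : (n:ℝ) ≠ 0 := by positivity
  have hcast : ((i-1:ℕ):ℝ) = (i:ℝ) - 1 := by
    push_cast [Nat.cast_sub hi]; ring
  rw [hcast, Real.cos_sub_cos]
  rw [show (((i:ℝ)-1)*π/n + (i:ℝ)*π/n)/2 = (2*(i:ℝ)-1)*π/(2*n) by field_simp; ring]
  rw [show (((i:ℝ)-1)*π/n - (i:ℝ)*π/n)/2 = -(π/(2*n)) by field_simp; ring]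
  rw [Real.sin_neg]; ring

lemma sinHalfPos (n : ℕ) (hn : 1 ≤ n) : 0 < Real.sin (π/(2*n)) := by
  have hn1 : (1:ℝ) ≤ n := by exact_mod_cast hn
  apply Real.sin_pos_of_pos_of_lt_pi
  · positivity
  · rw [div_lt_iff₀ (by positivity)]
    nlinarith [pi_pos]

lemma rightSide (n μ s : ℕ) (hn : 1 ≤ n) (hμ : 1 ≤ μ) (hs : μ + s ≤ n) :
    (s:ℝ) * (cheb n (μ-1) - cheb n μ) ≤ 3 * (cheb n μ - cheb n (μ+s)) := by
  have hn0 : (0:ℝ) < n := by exact_mod_cast hn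
  have hμ1 : (1:ℝ) ≤ μ := by exact_mod_cast hμ
  have hsn : (μ:ℝ) + s ≤ n := by exact_mod_cast hs
  set h : ℝ := π/n with hh_def
  set T : ℝ := π - (2*(μ:ℝ)-1)*π/(2*n) with hT_def
  have hh : 0 < h := by positivity
  have htel : cheb n μ - cheb n (μ+s)
      = ∑ j ∈ Finset.range s, (cheb n (μ+j) - cheb n (μ+j+1)) := by
    have := Finset.sum_range_sub' (fun j => cheb n (μ+j)) s
    simp only [← add_assoc, add_zero] at this
    exact this.symm
  have hterm : ∀ j ∈ Finset.range s, cheb n (μ+j) - cheb n (μ+j+1)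
      = 2 * Real.sin (π/(2*n)) * Real.sin (T - ((j:ℕ)+1)*h) := by
    intro j hj
    have hlen := lenEq n (μ+j+1) hn (by omega)
    simp only [Nat.add_sub_cancel] at hlen
    rw [hlen]
    congr 1
    rw [show T - ((j:ℝ)+1)*h = π - ((2*((μ:ℝ)+j+1)-1)*π/(2*n)) by
      rw [hT_def, hh_def]; field_simp; ring]
    rw [Real.sin_pi_sub]
    push_cast
    ring_nf
  rw [htel, Finset.sum_congr rfl hterm, ← Finset.mul_sum]
  have hgen := genSum h T s hh ?_ ?_
  · have hsinT : Real.sin T = Real.sin ((2*(μ:ℝ)-1)*π/(2*n)) := by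
      rw [hT_def, Real.sin_pi_sub]
    rw [lenEq n μ hn hμ, ← hsinT]
    have hfac : (0:ℝ) ≤ 2 * Real.sin (π/(2*n)) := by linarith [sinHalfPos n hn]
    calc (s:ℝ) * (2 * Real.sin (π/(2*n)) * Real.sin T)
        = 2 * Real.sin (π/(2*n)) * ((s:ℝ) * Real.sin T) := by ring
      _ ≤ 2 * Real.sin (π/(2*n)) * (3 * ∑ j ∈ Finset.range s, Real.sin (T - ((j:ℕ)+1)*h)) :=
          mul_le_mul_of_nonneg_left hgen hfac
      _ = 3 * (2 * Real.sin (π/(2*n)) * ∑ j ∈ Finset.range s, Real.sin (T - ((j:ℕ)+1)*h)) := by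
          ring
  · rw [hT_def, hh_def]
    have hπ := pi_pos
    have e1 : (s:ℝ)*(π/n) + π/n/2 = (2*s+1)*π/(2*n) := by field_simp
    have e2 : π - (2*(μ:ℝ)-1)*π/(2*n) = (2*((n:ℝ)-μ)+1)*π/(2*n) := by field_simp; ring
    rw [e1, e2]
    gcongr
    linarith
  · rw [hT_def]
    have hπ := pi_pos
    have h2μ : (0:ℝ) ≤ 2*(μ:ℝ)-1 := by linarith
    have : 0 ≤ (2*(μ:ℝ)-1)*π/(2*n) := by positivity
    linarith

lemma leftSide (n μ s : ℕ) (hn : 1 ≤ n) (hs : s + 1 ≤ μ) (hμn : μ ≤ n) :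
    (s:ℝ) * (cheb n (μ-1) - cheb n μ) ≤ 3 * (cheb n (μ-1-s) - cheb n (μ-1)) := by
  have hn0 : (0:ℝ) < n := by exact_mod_cast Nat.pos_of_ne_zero (by omega)
  have hμ1 : (1:ℝ) ≤ μ := by exact_mod_cast (by omega : 1 ≤ μ)
  have hsμ : (s:ℝ) + 1 ≤ μ := by exact_mod_cast hs
  have hμn' : (μ:ℝ) ≤ n := by exact_mod_cast hμn
  set h : ℝ := π/n with hh_def
  set T : ℝ := (2*(μ:ℝ)-1)*π/(2*n) with hT_def
  have hh : 0 < h := by positivity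
  have htel : cheb n (μ-1-s) - cheb n (μ-1)
      = ∑ j ∈ Finset.range s, (cheb n (μ-1-(j+1)) - cheb n (μ-1-j)) := by
    have := Finset.sum_range_sub (fun j => cheb n (μ-1-j)) s
    simp only [Nat.sub_zero] at this
    rw [this]
  have hterm : ∀ j ∈ Finset.range s, cheb n (μ-1-(j+1)) - cheb n (μ-1-j)
      = 2 * Real.sin (π/(2*n)) * Real.sin (T - ((j:ℕ)+1)*h) := by
    intro j hj
    have hjs : j < s := Finset.mem_range.1 hj
    have e1 : μ-1-(j+1) = (μ-1-j) - 1 := by omega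
    rw [e1, lenEq n (μ-1-j) hn (by omega)]
    congr 1
    have hc : ((μ-1-j:ℕ):ℝ) = (μ:ℝ)-1-j := by
      push_cast [Nat.cast_sub (by omega : j ≤ μ-1), Nat.cast_sub (by omega : 1 ≤ μ)]
      ring
    rw [hc]
    have harg : (2*((μ:ℝ)-1-(j:ℝ))-1)*π/(2*(n:ℝ)) = T - ((j:ℝ)+1)*h := by
      rw [hT_def, hh_def]
      field_simp
      ring
    rw [harg]
  rw [htel, Finset.sum_congr rfl hterm, ← Finset.mul_sum]
  have hgen := genSum h T s hh ?_ ?_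
  · rw [lenEq n μ hn (by omega)]
    have hfac : (0:ℝ) ≤ 2 * Real.sin (π/(2*n)) := by linarith [sinHalfPos n hn]
    have hsinT : Real.sin T = Real.sin ((2*(μ:ℝ)-1)*π/(2*n)) := by rw [hT_def]
    rw [← hsinT]
    calc (s:ℝ) * (2 * Real.sin (π/(2*n)) * Real.sin T)
        = 2 * Real.sin (π/(2*n)) * ((s:ℝ) * Real.sin T) := by ring
      _ ≤ 2 * Real.sin (π/(2*n)) * (3 * ∑ j ∈ Finset.range s, Real.sin (T - ((j:ℕ)+1)*h)) :=
          mul_le_mul_of_nonneg_left hgen hfac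
      _ = 3 * (2 * Real.sin (π/(2*n)) * ∑ j ∈ Finset.range s, Real.sin (T - ((j:ℕ)+1)*h)) := by
          ring
  · rw [hT_def, hh_def]
    have hπ := pi_pos
    have e1 : (s:ℝ)*(π/n) + π/n/2 = (2*s+1)*π/(2*n) := by field_simp
    rw [e1]
    gcongr
    linarith
  · rw [hT_def]
    have hπ := pi_pos
    rw [div_le_iff₀ (by positivity)]
    nlinarith

lemma lenPos (n μ : ℕ) (hn : 1 ≤ n) (hμ : 1 ≤ μ) (hμn : μ ≤ n) :
    0 < cheb n (μ-1) - cheb n μ := by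
  rw [lenEq n μ hn hμ]
  have hn0 : (0:ℝ) < n := by exact_mod_cast Nat.pos_of_ne_zero (by omega)
  have hμ1 : (1:ℝ) ≤ μ := by exact_mod_cast hμ
  have hμn' : (μ:ℝ) ≤ n := by exact_mod_cast hμn
  have hπ := pi_pos
  have h2 : 0 < Real.sin ((2*(μ:ℝ)-1)*π/(2*n)) := by
    have hnum : (0:ℝ) < 2*(μ:ℝ)-1 := by linarith
    apply Real.sin_pos_of_pos_of_lt_pi
    · positivity
    · rw [div_lt_iff₀ (by positivity)]
      nlinarith
  have h1 := sinHalfPos n hn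
  exact mul_pos (mul_pos two_pos h1) h2

open Classical in
theorem stmt5 (c0 : ℝ) (hc0 : 0 < c0) (n : ℕ) (hn : 1 ≤ n)
    (μ : ℕ) (hμ1 : 1 ≤ μ) (hμn : μ ≤ n)
    (a b : ℝ) (hab : a ≤ b) (hJ : Set.Icc a b ⊆ Set.Icc (-1:ℝ) 1)
    (hIJ : Set.Icc (cheb n μ) (cheb n (μ-1)) ⊆ Set.Icc a b)
    (hlen : b - a ≤ c0 * (cheb n (μ-1) - cheb n μ)) :
    ((Finset.Icc 1 n).filter
        (fun i => (Set.Icc (cheb n i) (cheb n (i-1)) ∩ Set.Icc a b).Nonempty)).card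
      ≤ ⌊400 * c0⌋₊ + 2 := by
  set F := (Finset.Icc 1 n).filter
      (fun i => (Set.Icc (cheb n i) (cheb n (i-1)) ∩ Set.Icc a b).Nonempty) with hF_def
  have hD := lenPos n μ hn hμ1 hμn
  have hμF : μ ∈ F := by
    rw [hF_def, Finset.mem_filter]
    refine ⟨Finset.mem_Icc.2 ⟨hμ1, hμn⟩, ⟨cheb n μ, ⟨le_refl _, by linarith⟩,
      hIJ ⟨le_refl _, by linarith⟩⟩⟩
  have hFne : F.Nonempty := ⟨μ, hμF⟩
  obtain ⟨hkIcc, p, hpI, hpJ⟩ := Finset.mem_filter.1 (F.min'_mem hFne)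
  obtain ⟨hlIcc, q, hqI, hqJ⟩ := Finset.mem_filter.1 (F.max'_mem hFne)
  have hkμ : F.min' hFne ≤ μ := F.min'_le μ hμF
  have hμl : μ ≤ F.max' hFne := F.le_max' μ hμF
  set k := F.min' hFne with hk_def
  set l := F.max' hFne with hl_def
  rw [Finset.mem_Icc] at hkIcc hlIcc
  have hxk_b : cheb n k ≤ b := le_trans hpI.1 hpJ.2
  have ha_xl : a ≤ cheb n (l-1) := le_trans hqJ.1 hqI.2
  have hkey : cheb n k - cheb n (l-1) ≤ c0 * (cheb n (μ-1) - cheb n μ) := by linarith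
  set M := l - 1 - k with hM_def
  have hcard : F.card ≤ l + 1 - k := by
    have hsub : F ⊆ Finset.Icc k l := by
      intro i hi
      exact Finset.mem_Icc.2 ⟨F.min'_le i hi, F.le_max' i hi⟩
    have := Finset.card_le_card hsub
    rwa [Nat.card_Icc] at this
  have hMfloor : M ≤ ⌊400 * c0⌋₊ := by
    rcases Nat.eq_zero_or_pos M with hM0 | hM1
    · simp [hM0]
    · have hM : (M:ℝ) * (cheb n (μ-1) - cheb n μ) ≤ 3 * (cheb n k - cheb n (l-1)) := by
        rcases eq_or_lt_of_le hkμ with hkeq | hklt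
        · -- k = μ
          have hR := rightSide n μ M hn hμ1 (by omega)
          have e1 : μ + M = l - 1 := by omega
          rw [e1] at hR
          rw [hkeq]
          exact hR
        · rcases eq_or_lt_of_le hμl with hleq | hllt
          · -- μ = l
            have hL := leftSide n μ M hn (by omega) hμn
            have e1 : μ - 1 - M = k := by omega
            rw [e1] at hL
            rw [← hleq]
            exact hL
          · -- k < μ < l
            have hL := leftSide n μ (μ-1-k) hn (by omega) hμn
            have hR := rightSide n μ (l-1-μ) hn hμ1 (by omega)
            have e1 : μ - 1 - (μ-1-k) = k := by omega
            have e2 : μ + (l-1-μ) = l - 1 := by omega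
            rw [e1] at hL
            rw [e2] at hR
            have eM : (M:ℝ) = ((μ-1-k:ℕ):ℝ) + ((l-1-μ:ℕ):ℝ) + 1 := by
              have : M = (μ-1-k) + (l-1-μ) + 1 := by omega
              exact_mod_cast congrArg (Nat.cast : ℕ → ℝ) this
            rw [eM]
            linarith
      have h3 : (M:ℝ) * (cheb n (μ-1) - cheb n μ) ≤ (3*c0) * (cheb n (μ-1) - cheb n μ) := by
        calc (M:ℝ) * (cheb n (μ-1) - cheb n μ) ≤ 3 * (cheb n k - cheb n (l-1)) := hM
          _ ≤ (3*c0) * (cheb n (μ-1) - cheb n μ) := by linarith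
      have hM3 : (M:ℝ) ≤ 3*c0 := le_of_mul_le_mul_right (by linarith) hD
      apply Nat.le_floor
      push_cast
      linarith
  calc F.card ≤ l + 1 - k := hcard
    _ ≤ M + 2 := by omega
    _ ≤ ⌊400 * c0⌋₊ + 2 := by omega
end

section
/- For the Chebyshev partition (x_i)_{i=0}^n of [-1,1] with n ≥ 2 and indices 1 ≤ i ≤ n, 1 ≤ μ ≤ ⌈n/2⌉, one has |x_i - x_μ| / |I_μ| ≥ |i - μ|/200, where I_μ = [x_μ, x_{μ-1}]. -/
open Real in
lemma sin_lb_aux {x : ℝ} (hx : 0 ≤ x) (hx' : x ≤ 7 * π / 8) : x / 10 ≤ Real.sin x := by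
  have hπ := Real.pi_pos
  rcases le_or_gt x (π / 2) with h | h
  · have h1 := Real.mul_le_sin hx h
    have h2 : x / 10 ≤ 2 / π * x := by
      rw [div_mul_eq_mul_div 2 π x, le_div_iff₀ hπ]
      nlinarith [mul_le_mul_of_nonneg_left Real.pi_le_four hx]
    linarith
  · -- x ∈ (π/2, 7π/8]
    have h1 : Real.sin x = Real.cos (x - π / 2) := by
      have hh : π / 2 - x = -(x - π / 2) := by ring
      rw [← Real.cos_pi_div_two_sub, hh, Real.cos_neg]
    have h2 : Real.cos (3 * π / 8) ≤ Real.cos (x - π / 2) :=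
      Real.cos_le_cos_of_nonneg_of_le_pi (by linarith) (by linarith) (by linarith)
    have h3 : Real.cos (3 * π / 8) = Real.sin (π / 8) := by
      rw [← Real.cos_pi_div_two_sub]; ring_nf
    have h4 : π / 8 - (π / 8) ^ 3 / 4 < Real.sin (π / 8) :=
      by have h4a := Real.sin_gt_sub_cube (x := π / 8) (by positivity)
         have h4b : 0 ≤ (π / 8) ^ 3 := by positivity
         linarith
    have h5 : π < 3.15 := Real.pi_lt_d2
    have hπ2 : π ^ 2 < 9.9225 := by nlinarith
    have hπ3 : π ^ 3 < 9.9225 * π := by nlinarith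
    have h6 : (π / 8) ^ 3 / 4 ≤ 3 * π / 80 := by
      have : (π / 8) ^ 3 / 4 = π ^ 3 / 2048 := by ring
      rw [this]; linarith
    linarith

set_option maxHeartbeats 1000000 in
theorem stmt6 (n : ℕ) (hn : 2 ≤ n) (i μ : ℕ) (hi1 : 1 ≤ i) (hin : i ≤ n)
    (hμ1 : 1 ≤ μ) (hμ : μ ≤ (n + 1) / 2) :
    (|(i:ℝ) - (μ:ℝ)| / 200) * (cheb n (μ-1) - cheb n μ) ≤ |cheb n i - cheb n μ| := by
  have h2μ : 2 * μ ≤ n + 1 := by omega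
  have hπ := Real.pi_pos
  have hN : (0:ℝ) < n := by exact_mod_cast Nat.lt_of_lt_of_le (by norm_num) hn
  have hNne : (n:ℝ) ≠ 0 := ne_of_gt hN
  have hiR : (i:ℝ) ≤ n := by exact_mod_cast hin
  have hiR1 : (1:ℝ) ≤ (i:ℝ) := by exact_mod_cast hi1
  have hμR1 : (1:ℝ) ≤ (μ:ℝ) := by exact_mod_cast hμ1
  have hμR : 2 * (μ:ℝ) ≤ (n:ℝ) + 1 := by exact_mod_cast h2μ
  have hnR : (2:ℝ) ≤ n := by exact_mod_cast hn
  set d : ℝ := |(i:ℝ) - (μ:ℝ)| with hd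
  set s : ℝ := ((i:ℝ) + μ) * Real.pi / (2 * n) with hs
  set t : ℝ := ((i:ℝ) - μ) * Real.pi / (2 * n) with ht
  set u : ℝ := (2 * (μ:ℝ) - 1) * Real.pi / (2 * n) with hu
  set v : ℝ := Real.pi / (2 * n) with hv
  have hd0 : 0 ≤ d := abs_nonneg _
  have hcast : ((μ - 1 : ℕ) : ℝ) = (μ:ℝ) - 1 := by
    have := Nat.cast_sub (R := ℝ) hμ1; simpa using this
  -- identity for the interval length
  have e2 : cheb n (μ - 1) - cheb n μ = 2 * Real.sin u * Real.sin v := by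
    unfold cheb
    rw [hcast, Real.cos_sub_cos]
    have a1 : (((μ:ℝ) - 1) * Real.pi / n + (μ:ℝ) * Real.pi / n) / 2 = u := by
      rw [hu]; field_simp; ring
    have a2 : (((μ:ℝ) - 1) * Real.pi / n - (μ:ℝ) * Real.pi / n) / 2 = -v := by
      rw [hv]; field_simp; ring
    rw [a1, a2, Real.sin_neg]; ring
  have e1 : cheb n i - cheb n μ = -2 * Real.sin s * Real.sin t := by
    unfold cheb
    rw [Real.cos_sub_cos]
    have a1 : ((i:ℝ) * Real.pi / n + (μ:ℝ) * Real.pi / n) / 2 = s := by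
      rw [hs]; field_simp
    have a2 : ((i:ℝ) * Real.pi / n - (μ:ℝ) * Real.pi / n) / 2 = t := by
      rw [ht]; field_simp
    rw [a1, a2]
  -- range facts
  have hs0 : 0 ≤ s := by
    apply div_nonneg _ (by linarith)
    have : (0:ℝ) ≤ (i:ℝ) + μ := by linarith
    positivity
  have hs78 : s ≤ 7 * Real.pi / 8 := by
    rw [hs, div_le_div_iff₀ (by linarith) (by norm_num)]
    have hint := mul_le_mul_of_nonneg_right
      (show ((i:ℝ) + μ) * 8 ≤ 14 * n by linarith) (le_of_lt hπ)
    nlinarith [hint]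
  have habs_t : |t| = d * v := by
    rw [ht, hv, hd, abs_div, abs_mul, abs_of_pos hπ,
      abs_of_pos (show (0:ℝ) < 2 * n by linarith)]
    ring
  have hdn : d ≤ (n:ℝ) - 1 := by
    rw [hd, abs_sub_le_iff]; constructor <;> linarith
  have ht78 : |t| ≤ 7 * Real.pi / 8 := by
    have h1 : |t| = d * Real.pi / (2 * n) := by rw [habs_t, hv]; ring
    rw [h1, div_le_div_iff₀ (by linarith) (by norm_num)]
    linarith [mul_le_mul_of_nonneg_right hdn (le_of_lt hπ), mul_pos hN hπ]
  have hu0 : 0 ≤ u := by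
    apply div_nonneg _ (by linarith)
    have : (0:ℝ) ≤ 2 * (μ:ℝ) - 1 := by linarith
    positivity
  have hv0 : 0 ≤ v := by positivity
  have hsinu : Real.sin u ≤ u := Real.sin_le hu0
  have hsinv : Real.sin v ≤ v := Real.sin_le hv0
  have hsinu0 : 0 ≤ Real.sin u := by
    apply Real.sin_nonneg_of_nonneg_of_le_pi hu0
    rw [hu, div_le_iff₀ (by linarith)]
    linarith [mul_le_mul_of_nonneg_right
      (show 2 * (μ:ℝ) - 1 ≤ 2 * n by linarith) (le_of_lt hπ)]
  have hsinv0 : 0 ≤ Real.sin v := by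
    apply Real.sin_nonneg_of_nonneg_of_le_pi hv0
    rw [hv, div_le_iff₀ (by linarith)]
    nlinarith [mul_pos hN hπ]
  -- |sin t| = sin |t|
  have habs_sin : |Real.sin t| = Real.sin |t| := by
    rcases le_or_gt 0 t with h | h
    · rw [abs_of_nonneg h, abs_of_nonneg]
      apply Real.sin_nonneg_of_nonneg_of_le_pi h
      calc t ≤ |t| := le_abs_self t
        _ ≤ 7 * Real.pi / 8 := ht78
        _ ≤ Real.pi := by linarith
    · have hmt : -t ≤ Real.pi := by
        calc -t ≤ |t| := neg_le_abs t
          _ ≤ 7 * Real.pi / 8 := ht78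
          _ ≤ Real.pi := by linarith
      have h2 : 0 ≤ Real.sin (-t) :=
        Real.sin_nonneg_of_nonneg_of_le_pi (by linarith) hmt
      rw [abs_of_neg h, Real.sin_neg]
      exact abs_of_nonpos (by linarith [h2, Real.sin_neg t])
  have hsin_s : s / 10 ≤ Real.sin s := sin_lb_aux hs0 hs78
  have hsin_t : |t| / 10 ≤ Real.sin |t| := sin_lb_aux (abs_nonneg t) ht78
  have hsin_s0 : 0 ≤ Real.sin s := le_trans (by linarith) hsin_s
  -- key comparison: u ≤ 2 s
  have hu2s : u ≤ 2 * s := by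
    have h2s : 2 * s = (2 * ((i:ℝ) + μ)) * Real.pi / (2 * n) := by rw [hs]; ring
    rw [hu, h2s, div_le_div_iff₀ (by linarith) (by linarith)]
    have hint := mul_le_mul_of_nonneg_right (mul_le_mul_of_nonneg_right
      (show 2 * (μ:ℝ) - 1 ≤ 2 * ((i:ℝ) + μ) by linarith) (le_of_lt hπ))
      (show (0:ℝ) ≤ 2 * n by linarith)
    linarith [hint]
  -- put it together
  rw [e1, e2]
  have hrhs : |(-2) * Real.sin s * Real.sin t| = 2 * Real.sin s * |Real.sin t| := by
    rw [abs_mul, abs_mul, abs_of_nonneg hsin_s0]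
    norm_num
  rw [hrhs, habs_sin]
  have key : d * u * v ≤ 2 * (s * |t|) := by
    rw [habs_t]
    linarith [mul_le_mul_of_nonneg_right
      (mul_le_mul_of_nonneg_left hu2s hd0) hv0]
  have hprod : s / 10 * (|t| / 10) ≤ Real.sin s * Real.sin |t| :=
    mul_le_mul hsin_s hsin_t (by positivity) hsin_s0
  calc d / 200 * (2 * Real.sin u * Real.sin v)
      ≤ d / 200 * (2 * (u * v)) := by
        have h1 : Real.sin u * Real.sin v ≤ u * v :=
          mul_le_mul hsinu hsinv hsinv0 hu0
        have h2 : 0 ≤ d / 200 := by positivity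
        have := mul_le_mul_of_nonneg_left h1 h2
        linarith
    _ = d * u * v / 100 := by ring
    _ ≤ 2 * (s * |t|) / 100 := by linarith
    _ ≤ 2 * Real.sin s * Real.sin |t| := by linarith [hprod]
end

section
/- Let M ∈ ℕ, Z = (z_j)_{j=1}^M ⊂ [-1,1] strictly increasing, and let w be a doubling weight on [-1,1]. Suppose that for any n ∈ ℕ, A > 0, and x, y with [x,y] ⊂ I_{A,1/n} (i.e., |u - z_j| ≥ A δ_n(z_j) for all u ∈ [x,y] and all j) and |x-y| ≤ B δ_n(x), one has c* w(y) ≤ w(x) ≤ c*^{-1} w(y) with c* depending only on w, A, B. Then for any n ∈ ℕ and A > 0, w(x) ≍ w_n(x) for all x ∈ I_{A,1/n}, with equivalence constants depending only on w and A. -/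
open MeasureTheory

noncomputable def wInt (w : ℝ → ℝ) (a b : ℝ) : ℝ :=
  ∫ u in Set.Icc a b ∩ Set.Icc (-1:ℝ) 1, w u

def IsDoubling (w : ℝ → ℝ) (L : ℝ) : Prop :=
  (∀ x, 0 ≤ w x) ∧ IntegrableOn w (Set.Icc (-1:ℝ) 1) ∧
  (0 < ∫ u in Set.Icc (-1:ℝ) 1, w u) ∧
  ∀ a b : ℝ, -1 ≤ a → a ≤ b → b ≤ 1 →
    wInt w ((a+b)/2 - (b-a)) ((a+b)/2 + (b-a)) ≤ L * wInt w a b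

/-- `wavg w n x = w_n(x)`, the `n`-th average of `w`. -/
noncomputable def wavg (w : ℝ → ℝ) (n : ℕ) (x : ℝ) : ℝ :=
  (deltan n x)⁻¹ * wInt w (x - deltan n x) (x + deltan n x)

/-- `I_{A,h}`: points of `[-1,1]` at distance at least `A·ρ(h,z_j)` from every `z_j`. -/
def ISet (M : ℕ) (z : Fin M → ℝ) (A h : ℝ) : Set ℝ :=
  {x | x ∈ Set.Icc (-1:ℝ) 1 ∧ ∀ j, A * (h * Real.sqrt (1 - (z j)^2) + h^2) ≤ |x - z j|}

lemma deltan_pos (n : ℕ) (hn : 1 ≤ n) (x : ℝ) : 0 < deltan n x := by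
  have hn' : (0:ℝ) < n := by exact_mod_cast hn
  unfold deltan
  positivity

lemma deltan_le_two (n : ℕ) (hn : 1 ≤ n) (x : ℝ) : deltan n x ≤ 2 := by
  have hn' : (1:ℝ) ≤ n := by exact_mod_cast hn
  have h1 : Real.sqrt (1 - x^2) ≤ 1 := by
    calc Real.sqrt (1 - x^2) ≤ Real.sqrt 1 := Real.sqrt_le_sqrt (by nlinarith [sq_nonneg x])
      _ = 1 := Real.sqrt_one
  have h2 : Real.sqrt (1 - x^2) / n ≤ 1 := by
    rw [div_le_one (by linarith)]; linarith
  have h3 : 1 / (n:ℝ)^2 ≤ 1 := by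
    rw [div_le_one (by nlinarith)]; nlinarith
  unfold deltan; linarith

lemma sqrt_bound (x zj m : ℝ) (hx : x ∈ Set.Icc (-1:ℝ) 1) (hzj : zj ∈ Set.Icc (-1:ℝ) 1)
    (hm : 1 ≤ m) :
    Real.sqrt (1 - x^2) ≤ Real.sqrt (1 - zj^2) + m * |x - zj| + 1/(2*m) := by
  obtain ⟨hx1, hx2⟩ := hx
  obtain ⟨hz1, hz2⟩ := hzj
  have hb0 : (0:ℝ) ≤ 1 - zj^2 := by nlinarith
  set b := Real.sqrt (1 - zj^2) with hbdef
  set d := |x - zj| with hddef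
  have hb : b^2 = 1 - zj^2 := Real.sq_sqrt hb0
  have hbn : 0 ≤ b := Real.sqrt_nonneg _
  have hd0 : 0 ≤ d := abs_nonneg _
  have hm0 : (0:ℝ) < m := by linarith
  set u : ℝ := 1/(2*m) with hudef
  have hu0 : 0 < u := by positivity
  have hinv : u * (2*m) = 1 := by rw [hudef]; field_simp
  have key : 1 - x^2 ≤ (1 - zj^2) + 2*d := by
    have habs : |(x - zj) * (x + zj)| = d * |x + zj| := by rw [abs_mul]
    have h2 : |x + zj| ≤ 2 := by rw [abs_le]; constructor <;> linarith
    have h3 : |x^2 - zj^2| ≤ 2 * d := by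
      rw [show x^2 - zj^2 = (x - zj)*(x + zj) by ring, abs_mul]
      nlinarith
    have h4 := neg_abs_le (x^2 - zj^2)
    linarith
  have hX0 : 0 ≤ m*d + u := by positivity
  have hsq : 1 - x^2 ≤ (b + (m*d + u))^2 := by
    nlinarith [sq_nonneg (m*d - u), mul_nonneg hbn hX0, mul_nonneg hd0 hu0.le]
  calc Real.sqrt (1 - x^2) ≤ Real.sqrt ((b + (m*d + u))^2) := Real.sqrt_le_sqrt hsq
    _ = b + (m*d + u) := Real.sqrt_sq (by linarith)
    _ = b + m * d + u := by ring

lemma deltan_le (n : ℕ) (hn : 1 ≤ n) (x zj : ℝ) (hx : x ∈ Set.Icc (-1:ℝ) 1)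
    (hzj : zj ∈ Set.Icc (-1:ℝ) 1) :
    deltan n x ≤ 2 * deltan n zj + |x - zj| := by
  have hm : (1:ℝ) ≤ n := by exact_mod_cast hn
  have hm0 : (0:ℝ) < n := by linarith
  have h := sqrt_bound x zj n hx hzj hm
  have h2 : Real.sqrt (1 - x^2) / (n:ℝ) ≤
      Real.sqrt (1 - zj^2)/(n:ℝ) + |x - zj| + 1/(2*(n:ℝ)^2) := by
    calc Real.sqrt (1 - x^2) / (n:ℝ)
        ≤ (Real.sqrt (1 - zj^2) + (n:ℝ) * |x - zj| + 1/(2*(n:ℝ))) / (n:ℝ) := by gcongr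
      _ = Real.sqrt (1 - zj^2)/(n:ℝ) + |x - zj| + 1/(2*(n:ℝ)^2) := by
          field_simp
  have h3 : 1/(2*(n:ℝ)^2) = (1/2) * (1/(n:ℝ)^2) := by ring
  have h4 : 0 ≤ Real.sqrt (1 - zj^2)/(n:ℝ) := by positivity
  have h5 : 0 < 1/(n:ℝ)^2 := by positivity
  unfold deltan
  rw [h3] at h2
  linarith

lemma doubling_iter (w : ℝ → ℝ) (L : ℝ) (hw0 : ∀ x, 0 ≤ w x)
    (hwI : MeasureTheory.IntegrableOn w (Set.Icc (-1:ℝ) 1))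
    (hwD : ∀ a b : ℝ, -1 ≤ a → a ≤ b → b ≤ 1 →
      wInt w ((a+b)/2 - (b-a)) ((a+b)/2 + (b-a)) ≤ L * wInt w a b)
    (hL1 : 1 ≤ L) (aW bW : ℝ) (haW : -1 ≤ aW) (hbW : bW ≤ 1) :
    ∀ k : ℕ, ∀ a b : ℝ, aW ≤ a → a ≤ b → b ≤ bW →
      bW - aW ≤ (3/2:ℝ)^k * (b - a) →
      (∫ u in Set.Icc aW bW, w u) ≤ L^k * ∫ u in Set.Icc a b, w u := by
  intro k
  induction k with
  | zero =>
    intro a b h1 h2 h3 h4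
    simp only [pow_zero, one_mul] at h4 ⊢
    have ha : a = aW := by linarith
    have hb : b = bW := by linarith
    rw [ha, hb]
  | succ k ih =>
    intro a b h1 h2 h3 h4
    have hWab : aW ≤ bW := le_trans h1 (le_trans h2 h3)
    set c : ℝ := (a+b)/2 with hc
    set l : ℝ := b - a with hl
    have hl0 : 0 ≤ l := by rw [hl]; linarith
    set a' := max (c - l) aW with ha'
    set b' := min (c + l) bW with hb'
    have hac : a ≤ c := by rw [hc]; linarith
    have hcb : c ≤ b := by rw [hc]; linarith
    have h1' : aW ≤ a' := le_max_right _ _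
    have h3' : b' ≤ bW := min_le_right _ _
    have h2' : a' ≤ b' := by
      apply max_le
      · exact le_min (by linarith) (by linarith)
      · exact le_min (by linarith) hWab
    have hpow : (1:ℝ) ≤ (3/2:ℝ)^k := one_le_pow₀ (by norm_num)
    have hpow0 : (0:ℝ) ≤ (3/2:ℝ)^k := by positivity
    have h4' : bW - aW ≤ (3/2:ℝ)^k * (b' - a') := by
      rw [pow_succ] at h4
      have hcl : c + l - a = (3/2) * l := by rw [hc, hl]; ring
      have hcr : b - (c - l) = (3/2) * l := by rw [hc, hl]; ring
      rcases le_total (c - l) aW with hLc | hLc <;> rcases le_total bW (c + l) with hR | hR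
      · rw [ha', hb', max_eq_right hLc, min_eq_right hR]
        nlinarith
      · rw [ha', hb', max_eq_right hLc, min_eq_left hR]
        nlinarith
      · rw [ha', hb', max_eq_left hLc, min_eq_right hR]
        nlinarith
      · rw [ha', hb', max_eq_left hLc, min_eq_left hR]
        nlinarith
    have hIH := ih a' b' h1' h2' h3' h4'
    have hsubW : Set.Icc aW bW ⊆ Set.Icc (-1:ℝ) 1 := Set.Icc_subset_Icc haW hbW
    have e1 : wInt w a b = ∫ u in Set.Icc a b, w u := by
      have hss : Set.Icc a b ∩ Set.Icc (-1:ℝ) 1 = Set.Icc a b :=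
        Set.inter_eq_self_of_subset_left (Set.Icc_subset_Icc (by linarith) (by linarith))
      unfold wInt
      rw [hss]
    have e2 : (∫ u in Set.Icc a' b', w u) ≤ wInt w (c - l) (c + l) := by
      unfold wInt
      apply MeasureTheory.setIntegral_mono_set
      · exact hwI.mono_set Set.inter_subset_right
      · exact Filter.Eventually.of_forall hw0
      · apply HasSubset.Subset.eventuallyLE
        intro v hv
        refine ⟨⟨le_trans (le_max_left _ _) hv.1, le_trans hv.2 (min_le_left _ _)⟩, ?_⟩
        exact hsubW ⟨le_trans h1' hv.1, le_trans hv.2 h3'⟩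
    have e3 : wInt w (c - l) (c + l) ≤ L * wInt w a b := by
      have hD := hwD a b (by linarith) h2 (by linarith)
      rw [hc, hl]
      exact hD
    have hLk0 : (0:ℝ) ≤ L^k := pow_nonneg (by linarith) k
    calc (∫ u in Set.Icc aW bW, w u) ≤ L^k * ∫ u in Set.Icc a' b', w u := hIH
      _ ≤ L^k * (L * wInt w a b) :=
          mul_le_mul_of_nonneg_left (le_trans e2 e3) hLk0
      _ = L^(k+1) * ∫ u in Set.Icc a b, w u := by rw [e1, pow_succ]; ring

theorem stmt10 (M : ℕ) (hM : 1 ≤ M) (z : Fin M → ℝ) (hz : StrictMono z)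
    (hzI : ∀ j, z j ∈ Set.Icc (-1:ℝ) 1) (w : ℝ → ℝ) (L : ℝ) (hw : IsDoubling w L)
    (hyp : ∀ A B : ℝ, 0 < A → 0 < B → ∃ cs : ℝ, 0 < cs ∧ ∀ n : ℕ, 1 ≤ n → ∀ x y : ℝ,
      Set.uIcc x y ⊆ ISet M z A (1/n) → |x - y| ≤ B * deltan n x →
        cs * w y ≤ w x ∧ w x ≤ cs⁻¹ * w y) :
    ∀ A : ℝ, 0 < A → ∃ C : ℝ, 0 < C ∧ ∀ n : ℕ, 1 ≤ n → ∀ x ∈ ISet M z A (1/n),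
      C⁻¹ * wavg w n x ≤ w x ∧ w x ≤ C * wavg w n x := by
  obtain ⟨hw0, hwI, hwPos, hwD⟩ := hw
  have hL1 : 1 ≤ L := by
    have h := hwD (-1) 1 le_rfl (by norm_num) le_rfl
    have e1 : ((-1:ℝ)+1)/2 - (1 - -1) = -2 := by norm_num
    have e2 : ((-1:ℝ)+1)/2 + (1 - -1) = 2 := by norm_num
    rw [e1, e2] at h
    have e3 : wInt w (-2) 2 = wInt w (-1) 1 := by
      unfold wInt; rw [Set.Icc_inter_Icc, Set.Icc_inter_Icc]; norm_num
    have e4 : wInt w (-1) 1 = ∫ u in Set.Icc (-1:ℝ) 1, w u := by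
      unfold wInt; rw [Set.Icc_inter_Icc]; norm_num
    rw [e3, e4] at h
    nlinarith [hwPos]
  intro A hA
  obtain ⟨t, ht0, ht2, htA⟩ : ∃ t : ℝ, 0 < t ∧ t ≤ 1/2 ∧ t * (2*(A+2)) ≤ A := by
    refine ⟨min (A / (2*(A+2))) (1/2), lt_min (by positivity) (by norm_num),
      min_le_right _ _, ?_⟩
    have h := min_le_left (A / (2*(A+2))) (1/2)
    exact (le_div_iff₀ (by positivity)).1 h
  obtain ⟨cs, hcs0, hcs⟩ := hyp (A/2) 1 (by positivity) one_pos
  obtain ⟨k, hk⟩ := pow_unbounded_of_one_lt (2/t) (by norm_num : (1:ℝ) < 3/2)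
  have hLk : (0:ℝ) < L^k := pow_pos (by linarith) k
  set C : ℝ := (cs*t)⁻¹ + L^k * cs⁻¹ * t with hC
  have hc1 : 0 < (cs*t)⁻¹ := by positivity
  have hc2 : 0 < L^k * cs⁻¹ * t := by positivity
  have hC0 : 0 < C := by rw [hC]; linarith
  refine ⟨C, hC0, ?_⟩
  intro n hn x hx
  obtain ⟨hxI, hxz⟩ := hx
  have hn' : (1:ℝ) ≤ (n:ℝ) := by exact_mod_cast hn
  have hn0 : (0:ℝ) < n := by linarith
  set δ := deltan n x with hδ
  have hδ0 : 0 < δ := deltan_pos n hn x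
  have hδ2 : δ ≤ 2 := deltan_le_two n hn x
  clear_value δ
  have hdeq : ∀ y : ℝ, (1/(n:ℝ)) * Real.sqrt (1 - y^2) + (1/(n:ℝ))^2 = deltan n y := by
    intro y
    unfold deltan
    field_simp
  have hxz' : ∀ j, A * deltan n (z j) ≤ |x - z j| := by
    intro j
    have h := hxz j
    rwa [hdeq (z j)] at h
  -- neighborhood lemma
  have hnb : ∀ y : ℝ, |y - x| ≤ t * δ → y ∈ Set.Icc (-1:ℝ) 1 → y ∈ ISet M z (A/2) (1/n) := by
    intro y hy hyI
    refine ⟨hyI, fun j => ?_⟩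
    rw [hdeq (z j)]
    have hd1 : deltan n x ≤ 2 * deltan n (z j) + |x - z j| := deltan_le n hn x (z j) hxI (hzI j)
    rw [← hδ] at hd1
    have hd2 := hxz' j
    set e := deltan n (z j) with he
    set d := |x - z j| with hd
    clear_value e d
    have he0 : 0 ≤ e := by rw [he]; exact (deltan_pos n hn (z j)).le
    have hdn0 : 0 ≤ d := by rw [hd]; exact abs_nonneg _
    have htri : d ≤ |x - y| + |y - z j| := by rw [hd]; exact abs_sub_le x y (z j)
    have hxy : |x - y| = |y - x| := abs_sub_comm x y
    have hY0 : 0 ≤ |y - z j| := abs_nonneg _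
    have h1 : t * δ ≤ t * (2*e + d) := mul_le_mul_of_nonneg_left hd1 ht0.le
    have h2ed : 0 ≤ 2*e + d := by linarith
    have h2 : t * (2*e+d) * (2*(A+2)) ≤ A * (2*e+d) := by
      calc t * (2*e+d) * (2*(A+2)) = (2*e+d) * (t*(2*(A+2))) := by ring
        _ ≤ (2*e+d) * A := mul_le_mul_of_nonneg_left htA h2ed
        _ = A * (2*e+d) := by ring
    have h3 : A * (2*e+d) ≤ (A+2) * d := by linarith
    have hA2 : (0:ℝ) < A + 2 := by linarith
    have h4 : 2 * (t*(2*e+d)) ≤ d := by nlinarith [h2, h3, hA2]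
    linarith
  -- construct the good interval J0 = [a0, b0]
  have htd0 : 0 ≤ t*δ := mul_nonneg ht0.le hδ0.le
  have htδ1 : t * δ ≤ 1 := by
    have h := mul_le_mul ht2 hδ2 hδ0.le (by norm_num : (0:ℝ) ≤ 1/2)
    linarith
  have htδδ : t*δ ≤ δ := by
    have h : t*δ ≤ 1*δ := mul_le_mul_of_nonneg_right (by linarith) hδ0.le
    linarith
  have hsetup : ∃ a0 b0 : ℝ, b0 = a0 + t*δ ∧ a0 ≤ x ∧ x ≤ b0 ∧ -1 ≤ a0 ∧ b0 ≤ 1 := by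
    rcases le_or_gt x 0 with hside | hside
    · exact ⟨x, x + t*δ, rfl, le_rfl, by linarith, hxI.1, by linarith⟩
    · exact ⟨x - t*δ, x, by ring, by linarith, le_rfl, by linarith, hxI.2⟩
  obtain ⟨a0, b0, hb0, ha0x, hxb0, ha0m, hb0m⟩ := hsetup
  have hJ1 : Set.Icc a0 b0 ⊆ Set.Icc (-1:ℝ) 1 := Set.Icc_subset_Icc ha0m hb0m
  have hJdist : ∀ y ∈ Set.Icc a0 b0, |y - x| ≤ t*δ := by
    intro y hy
    rw [abs_le]
    constructor <;> [skip; skip] <;> (obtain ⟨hy1, hy2⟩ := hy)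
    · linarith
    · linarith
  have hcomp : ∀ y ∈ Set.Icc a0 b0, cs * w x ≤ w y ∧ w y ≤ cs⁻¹ * w x := by
    intro y hy
    have huIcc : Set.uIcc x y ⊆ ISet M z (A/2) (1/n) := by
      have hsub : Set.uIcc x y ⊆ Set.Icc a0 b0 :=
        Set.OrdConnected.uIcc_subset Set.ordConnected_Icc ⟨ha0x, hxb0⟩ hy
      exact fun v hv => hnb v (hJdist v (hsub hv)) (hJ1 (hsub hv))
    have habs : |x - y| ≤ 1 * deltan n x := by
      rw [one_mul, abs_sub_comm, ← hδ]
      have := hJdist y hy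
      linarith
    obtain ⟨hA1, hA2⟩ := hcs n hn x y huIcc habs
    constructor
    · have h := mul_le_mul_of_nonneg_left hA2 hcs0.le
      rwa [← mul_assoc, mul_inv_cancel₀ hcs0.ne', one_mul] at h
    · have h := mul_le_mul_of_nonneg_left hA1 (inv_nonneg.2 hcs0.le)
      rwa [← mul_assoc, inv_mul_cancel₀ hcs0.ne', one_mul] at h
  have hIntJ : IntegrableOn w (Set.Icc a0 b0) := hwI.mono_set hJ1
  have hvol : (volume (Set.Icc a0 b0)).toReal = t*δ := by
    rw [Real.volume_Icc, hb0, show a0 + t*δ - a0 = t*δ by ring]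
    exact ENNReal.toReal_ofReal (by positivity)
  have hconst : ∀ cc : ℝ, IntegrableOn (fun _ => cc) (Set.Icc a0 b0) (volume : Measure ℝ) := by
    intro cc
    exact integrableOn_const (by rw [Real.volume_Icc]; exact ENNReal.ofReal_ne_top)
  have hlow : cs * w x * (t*δ) ≤ ∫ u in Set.Icc a0 b0, w u := by
    have h := setIntegral_mono_on (hconst (cs * w x)) hIntJ measurableSet_Icc
      (fun y hy => (hcomp y hy).1)
    rwa [setIntegral_const, measureReal_def, hvol, smul_eq_mul, mul_comm] at h
  have hup : (∫ u in Set.Icc a0 b0, w u) ≤ cs⁻¹ * w x * (t*δ) := by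
    have h := setIntegral_mono_on hIntJ (hconst (cs⁻¹ * w x)) measurableSet_Icc
      (fun y hy => (hcomp y hy).2)
    rwa [setIntegral_const, measureReal_def, hvol, smul_eq_mul, mul_comm] at h
  -- the window W
  set aW := max (x - δ) (-1:ℝ) with haWdef
  set bW := min (x + δ) (1:ℝ) with hbWdef
  have haW1 : -1 ≤ aW := le_max_right _ _
  have hbW1 : bW ≤ 1 := min_le_right _ _
  have hWlen : bW - aW ≤ 2*δ := by
    have h1 := min_le_left (x + δ) (1:ℝ)
    have h2 := le_max_left (x - δ) (-1:ℝ)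
    rw [← hbWdef] at h1
    rw [← haWdef] at h2
    linarith
  have hWint : wInt w (x - δ) (x + δ) = ∫ u in Set.Icc aW bW, w u := by
    unfold wInt
    rw [Set.Icc_inter_Icc]
  have haWa0 : aW ≤ a0 := max_le (by linarith) ha0m
  have hb0bW : b0 ≤ bW := le_min (by linarith) hb0m
  have ha0b0 : a0 ≤ b0 := by linarith
  have hJW : Set.Icc a0 b0 ⊆ Set.Icc aW bW := Set.Icc_subset_Icc haWa0 hb0bW
  have hkcond : bW - aW ≤ (3/2:ℝ)^k * (b0 - a0) := by
    have h1 : 2 < (3/2:ℝ)^k * t := by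
      have := (div_lt_iff₀ ht0).1 hk
      linarith
    have h2 : b0 - a0 = t * δ := by rw [hb0]; ring
    rw [h2]
    have h3 := mul_le_mul_of_nonneg_right h1.le hδ0.le
    have h4 : (3/2:ℝ)^k * t * δ = (3/2:ℝ)^k * (t * δ) := by ring
    linarith
  have hdi := doubling_iter w L hw0 hwI hwD hL1 aW bW haW1 hbW1 k a0 b0 haWa0 ha0b0 hb0bW hkcond
  have hsubint : (∫ u in Set.Icc a0 b0, w u) ≤ ∫ u in Set.Icc aW bW, w u :=
    setIntegral_mono_set (hwI.mono_set (Set.Icc_subset_Icc haW1 hbW1))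
      (Filter.Eventually.of_forall hw0) (HasSubset.Subset.eventuallyLE hJW)
  have hwavg : wavg w n x = δ⁻¹ * ∫ u in Set.Icc aW bW, w u := by
    unfold wavg
    rw [← hδ, hWint]
  constructor
  · -- C⁻¹ * wavg ≤ w x
    have h1 : wavg w n x ≤ L^k * cs⁻¹ * t * w x := by
      rw [hwavg]
      calc δ⁻¹ * ∫ u in Set.Icc aW bW, w u
          ≤ δ⁻¹ * (L^k * (cs⁻¹ * w x * (t*δ))) := by
            apply mul_le_mul_of_nonneg_left _ (inv_nonneg.2 hδ0.le)
            exact le_trans hdi (mul_le_mul_of_nonneg_left hup hLk.le)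
        _ = L^k * cs⁻¹ * t * w x := by field_simp
    have h2 : L^k * cs⁻¹ * t ≤ C := by rw [hC]; linarith
    have h3 : wavg w n x ≤ C * w x :=
      le_trans h1 (mul_le_mul_of_nonneg_right h2 (hw0 x))
    have h4 := mul_le_mul_of_nonneg_left h3 (inv_nonneg.2 hC0.le)
    rwa [← mul_assoc, inv_mul_cancel₀ hC0.ne', one_mul] at h4
  · -- w x ≤ C * wavg
    have h1 : cs * w x * (t*δ) ≤ ∫ u in Set.Icc aW bW, w u := hlow.trans hsubint
    have h2 : cs * t * w x ≤ wavg w n x := by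
      rw [hwavg]
      calc cs * t * w x = δ⁻¹ * (cs * w x * (t*δ)) := by field_simp
        _ ≤ δ⁻¹ * ∫ u in Set.Icc aW bW, w u :=
            mul_le_mul_of_nonneg_left h1 (inv_nonneg.2 hδ0.le)
    have hcst : (0:ℝ) < cs * t := mul_pos hcs0 ht0
    have hwavg0 : 0 ≤ wavg w n x :=
      le_trans (mul_nonneg hcst.le (hw0 x)) h2
    have hc1C : (cs*t)⁻¹ ≤ C := by rw [hC]; linarith
    calc w x = (cs*t)⁻¹ * (cs*t*w x) := by
          rw [← mul_assoc, inv_mul_cancel₀ hcst.ne', one_mul]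
      _ ≤ (cs*t)⁻¹ * wavg w n x := by
          apply mul_le_mul_of_nonneg_left _ (inv_nonneg.2 hcst.le)
          calc cs*t*w x = cs * t * w x := by ring
            _ ≤ wavg w n x := h2
      _ ≤ C * wavg w n x := mul_le_mul_of_nonneg_right hc1C hwavg0
end

section
/- Let 1 ≤ p < ∞, r, n ∈ ℕ, z ∈ [-1,1], and let I ⊂ [-1,1] be an interval containing z with |x - z| ≤ A δ_n(z) for all x ∈ I, where A > 0. Let Q be a polynomial and q_r its Taylor polynomial of degree < r at z (so (Q - q_r)^{(ν)}(z) = 0 for 0 ≤ ν ≤ r-1). Then for every nonnegative weight function w, (∫_I |Q(x) - q_r(x)|^p w(x) dx)^{1/p} ≤ c · (A δ_n(z))^{r - 1/p} · ‖Q^{(r)}‖_{L^p(I)} · (∫_I w)^{1/p}, where c depends only on r and p. -/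
open MeasureTheory

private lemma ftc_poly (P : Polynomial ℝ) (z x : ℝ) :
    ∫ u in z..x, (Polynomial.derivative P).eval u = P.eval x - P.eval z :=
  intervalIntegral.integral_eq_sub_of_hasDerivAt (fun u _ => P.hasDerivAt u)
    ((P.derivative.continuous_aeval).intervalIntegrable _ _)

private lemma abs_sub_le_of_uIoc {z x u : ℝ} (hu : u ∈ Set.uIoc z x) : |u - z| ≤ |x - z| := by
  rcases le_total z x with h | h
  · rw [Set.uIoc_of_le h] at hu
    rw [abs_of_nonneg (by linarith [hu.1.le]), abs_of_nonneg (by linarith)]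
    linarith [hu.2]
  · rw [Set.uIoc_of_ge h] at hu
    rw [abs_of_nonpos (by linarith [hu.2]), abs_of_nonpos (by linarith)]
    linarith [hu.1.le]

private lemma key (a b z : ℝ) (hz : z ∈ Set.Icc a b) :
    ∀ (m : ℕ) (P : Polynomial ℝ), (∀ ν < m + 1, (Polynomial.derivative^[ν] P).eval z = 0) →
    ∀ x ∈ Set.Icc a b, |P.eval x| ≤
      (∫ u in Set.Icc a b, |(Polynomial.derivative^[m+1] P).eval u|) * |x - z| ^ m := by
  intro m
  induction m with
  | zero =>
    intro P hP x hx
    have hPz : P.eval z = 0 := by simpa using hP 0 (by omega)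
    have hftc := ftc_poly P z x
    rw [hPz, sub_zero] at hftc
    have h1 : |P.eval x| ≤ ∫ u in Set.uIoc z x, |(Polynomial.derivative P).eval u| := by
      rw [← hftc]
      simpa [Real.norm_eq_abs] using
        intervalIntegral.norm_integral_le_integral_norm_uIoc
          (f := fun u => (Polynomial.derivative P).eval u) (a := z) (b := x) (μ := volume)
    have hsub : Set.uIoc z x ⊆ Set.Icc a b :=
      Set.uIoc_subset_uIcc.trans (Set.uIcc_subset_Icc hz hx)
    have h2 : ∫ u in Set.uIoc z x, |(Polynomial.derivative P).eval u| ≤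
        ∫ u in Set.Icc a b, |(Polynomial.derivative P).eval u| := by
      refine setIntegral_mono_set ?_ ?_ (HasSubset.Subset.eventuallyLE hsub)
      · exact ((Polynomial.derivative P).continuous_aeval.abs).integrableOn_Icc
      · exact Filter.Eventually.of_forall fun u => abs_nonneg _
    simpa using (h1.trans h2)
  | succ m ih =>
    intro P hP x hx
    have hPz : P.eval z = 0 := by simpa using hP 0 (by omega)
    set M : ℝ := ∫ u in Set.Icc a b, |(Polynomial.derivative^[m+1+1] P).eval u| with hMdef
    have hM0 : 0 ≤ M := setIntegral_nonneg measurableSet_Icc fun u _ => abs_nonneg _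
    have hsub : Set.uIoc z x ⊆ Set.Icc a b :=
      Set.uIoc_subset_uIcc.trans (Set.uIcc_subset_Icc hz hx)
    have hbound : ∀ u ∈ Set.uIoc z x,
        ‖(Polynomial.derivative P).eval u‖ ≤ M * |x - z| ^ m := by
      intro u hu
      have hder : ∀ ν < m + 1, (Polynomial.derivative^[ν] (Polynomial.derivative P)).eval z = 0 := by
        intro ν hν
        have := hP (ν + 1) (by omega)
        simpa [Function.iterate_succ_apply] using this
      have h1 := ih (Polynomial.derivative P) hder u (hsub hu)
      rw [Real.norm_eq_abs]
      have heq : (∫ u in Set.Icc a b,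
          |(Polynomial.derivative^[m+1] (Polynomial.derivative P)).eval u|) = M := by
        simp [hMdef, Function.iterate_succ_apply]
      rw [heq] at h1
      refine h1.trans ?_
      exact mul_le_mul_of_nonneg_left
        (pow_le_pow_left₀ (abs_nonneg _) (abs_sub_le_of_uIoc hu) m) hM0
    have hftc := ftc_poly P z x
    rw [hPz, sub_zero] at hftc
    have h2 := intervalIntegral.norm_integral_le_of_norm_le_const hbound
    rw [hftc, Real.norm_eq_abs] at h2
    calc |P.eval x| ≤ M * |x - z| ^ m * |x - z| := h2
    _ = M * |x - z| ^ (m + 1) := by ring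

theorem stmt12 (p : ℝ) (hp : 1 ≤ p) (r : ℕ) (hr : 1 ≤ r) :
    ∃ c : ℝ, 0 < c ∧ ∀ (n : ℕ), 1 ≤ n → ∀ (z a b A : ℝ) (w : ℝ → ℝ) (Q q : Polynomial ℝ),
      0 < A → Set.Icc a b ⊆ Set.Icc (-1:ℝ) 1 → z ∈ Set.Icc a b →
      (∀ x ∈ Set.Icc a b, |x - z| ≤ A * deltan n z) →
      q.degree < (r : WithBot ℕ) →
      (∀ ν < r, (Polynomial.derivative^[ν] (Q - q)).eval z = 0) →
      (∀ x, 0 ≤ w x) → IntegrableOn w (Set.Icc a b) →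
      (∫ x in Set.Icc a b, |Q.eval x - q.eval x| ^ p * w x) ^ (1/p) ≤
        c * (A * deltan n z) ^ ((r:ℝ) - 1/p) *
          (∫ x in Set.Icc a b, |(Polynomial.derivative^[r] Q).eval x| ^ p) ^ (1/p) *
          (∫ x in Set.Icc a b, w x) ^ (1/p) := by
  have hp0 : 0 < p := lt_of_lt_of_le one_pos hp
  refine ⟨2, two_pos, ?_⟩
  intro n hn z a b A w Q q hA hIcc hzab hdist hqdeg hder hw hwInt
  set D : ℝ := A * deltan n z with hDdef
  have hn0 : (0:ℝ) < (n:ℝ) := by exact_mod_cast hn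
  have hD : 0 < D := by
    have hs := Real.sqrt_nonneg (1 - z^2)
    have : 0 < deltan n z := by unfold deltan; positivity
    positivity
  have hab : a ≤ b := hzab.1.trans hzab.2
  -- the iterated derivative of q vanishes
  have hqnd : q.natDegree < r := by
    by_cases hq : q = 0
    · simpa [hq] using (show 0 < r from hr)
    · exact (Polynomial.natDegree_lt_iff_degree_lt hq).mpr hqdeg
  have hPr : Polynomial.derivative^[r] (Q - q) = Polynomial.derivative^[r] Q := by
    rw [Polynomial.iterate_derivative_sub, Polynomial.iterate_derivative_eq_zero hqnd, sub_zero]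
  -- apply key lemma with m = r - 1
  set s : ℕ := r - 1 with hsdef
  have hs1 : s + 1 = r := Nat.succ_pred_eq_of_pos hr
  set M : ℝ := ∫ u in Set.Icc a b, |(Polynomial.derivative^[r] Q).eval u| with hMdef
  have hM0 : 0 ≤ M := setIntegral_nonneg measurableSet_Icc fun u _ => abs_nonneg _
  have hkey : ∀ x ∈ Set.Icc a b, |(Q - q).eval x| ≤ M * |x - z| ^ s := by
    intro x hx
    have := key a b z hzab s (Q - q) (fun ν hν => hder ν (by omega)) x hx
    rwa [show s + 1 = r from hs1, hPr] at this
  set K : ℝ := M * D ^ s with hKdef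
  have hK0 : 0 ≤ K := mul_nonneg hM0 (pow_nonneg hD.le s)
  have hpw : ∀ x ∈ Set.Icc a b, |(Q - q).eval x| ≤ K := by
    intro x hx
    refine (hkey x hx).trans ?_
    exact mul_le_mul_of_nonneg_left (pow_le_pow_left₀ (abs_nonneg _) (hdist x hx) s) hM0
  -- Step 1: bound the weighted integral
  set W : ℝ := ∫ x in Set.Icc a b, w x with hWdef
  have hW0 : 0 ≤ W := setIntegral_nonneg measurableSet_Icc fun x _ => hw x
  have hcont : Continuous fun x : ℝ => |Q.eval x - q.eval x| ^ p := by
    have h1 : Continuous fun x : ℝ => |Q.eval x - q.eval x| :=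
      ((Q - q).continuous_aeval.congr (by simp [Polynomial.eval_sub])).abs
    exact h1.rpow_const fun x => Or.inr hp0.le
  have hfint : IntegrableOn (fun x => |Q.eval x - q.eval x| ^ p * w x) (Set.Icc a b) := by
    refine Integrable.mono (hwInt.const_mul (K ^ p)) ?_ ?_
    · exact (hcont.aestronglyMeasurable).mul hwInt.aestronglyMeasurable
    · rw [ae_restrict_iff' measurableSet_Icc]
      refine Filter.Eventually.of_forall fun x hx => ?_
      have h1 : |Q.eval x - q.eval x| ^ p ≤ K ^ p := by
        refine Real.rpow_le_rpow (abs_nonneg _) ?_ hp0.le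
        simpa [Polynomial.eval_sub] using hpw x hx
      have h2 : (0:ℝ) ≤ |Q.eval x - q.eval x| ^ p := Real.rpow_nonneg (abs_nonneg _) p
      rw [Real.norm_eq_abs, Real.norm_eq_abs, abs_of_nonneg (mul_nonneg h2 (hw x)),
        abs_of_nonneg (mul_nonneg (Real.rpow_nonneg hK0 p) (hw x))]
      exact mul_le_mul_of_nonneg_right h1 (hw x)
  have hstep1 : (∫ x in Set.Icc a b, |Q.eval x - q.eval x| ^ p * w x) ≤ K ^ p * W := by
    have := setIntegral_mono_on hfint (hwInt.const_mul (K ^ p)) measurableSet_Icc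
      (fun x hx => by
        refine mul_le_mul_of_nonneg_right ?_ (hw x)
        refine Real.rpow_le_rpow (abs_nonneg _) ?_ hp0.le
        simpa [Polynomial.eval_sub] using hpw x hx)
    rwa [integral_const_mul] at this
  have hLHS0 : (0:ℝ) ≤ ∫ x in Set.Icc a b, |Q.eval x - q.eval x| ^ p * w x :=
    setIntegral_nonneg measurableSet_Icc fun x _ =>
      mul_nonneg (Real.rpow_nonneg (abs_nonneg _) p) (hw x)
  have hstep2 : (∫ x in Set.Icc a b, |Q.eval x - q.eval x| ^ p * w x) ^ (1/p) ≤
      K * W ^ (1/p) := by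
    have h1 := Real.rpow_le_rpow hLHS0 hstep1 (by positivity : (0:ℝ) ≤ 1/p)
    refine h1.trans_eq ?_
    rw [Real.mul_rpow (Real.rpow_nonneg hK0 p) hW0, ← Real.rpow_mul hK0,
      mul_one_div_cancel hp0.ne', Real.rpow_one]
  -- Step 3: Hölder
  set Np : ℝ := (∫ x in Set.Icc a b, |(Polynomial.derivative^[r] Q).eval x| ^ p) ^ (1/p)
    with hNpdef
  have hNp0 : 0 ≤ Np :=
    Real.rpow_nonneg (setIntegral_nonneg measurableSet_Icc fun x _ =>
      Real.rpow_nonneg (abs_nonneg _) p) _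
  have hholder : M ≤ (b - a) ^ (1 - 1/p) * Np := by
    rcases eq_or_lt_of_le hp with hp1 | hp1
    · have : M = Np := by
        rw [hNpdef, ← hp1]
        simp [hMdef, Real.rpow_one]
      rw [← hp1]
      simp [this]
    · set pq : ℝ := p / (p - 1) with hpqdef
      have hpq : p.HolderConjugate pq := Real.HolderConjugate.conjExponent hp1
      haveI : IsFiniteMeasure (volume.restrict (Set.Icc a b)) :=
        ⟨by simp [Measure.restrict_apply_univ, Real.volume_Icc]⟩
      obtain ⟨C, hC⟩ := isCompact_Icc.exists_bound_of_continuousOn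
        ((Polynomial.derivative^[r] Q).continuous_aeval.continuousOn :
          ContinuousOn (fun x => (Polynomial.derivative^[r] Q).eval x) (Set.Icc a b))
      have hfmem : MemLp (fun x => (Polynomial.derivative^[r] Q).eval x) (ENNReal.ofReal p)
          (volume.restrict (Set.Icc a b)) := by
        refine MemLp.of_bound ((Polynomial.derivative^[r] Q).continuous_aeval.aestronglyMeasurable)
          C ?_
        rw [ae_restrict_iff' measurableSet_Icc]
        exact Filter.Eventually.of_forall fun x hx => hC x hx
      have hgmem : MemLp (fun _ : ℝ => (1:ℝ)) (ENNReal.ofReal pq)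
          (volume.restrict (Set.Icc a b)) := memLp_const 1
      have h := integral_mul_norm_le_Lp_mul_Lq (μ := volume.restrict (Set.Icc a b)) hpq
        hfmem hgmem
      simp only [norm_one, mul_one, Real.norm_eq_abs] at h
      have hvol : (∫ _x in Set.Icc a b, (1:ℝ) ^ pq) = b - a := by
        simp [Real.rpow_natCast, integral_const, Real.volume_Icc, hab,
          ENNReal.toReal_ofReal (by linarith : (0:ℝ) ≤ b - a)]
      rw [hvol] at h
      have hq_eq : 1 / pq = 1 - 1 / p := by
        rw [one_div, one_div, hpq.one_sub_inv.symm]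
      rw [hq_eq] at h
      exact h.trans_eq (by rw [mul_comm])
  -- Step 4: combine
  set e : ℝ := 1 - 1/p with hedef
  have he0 : 0 ≤ e := by
    have h1 : 1/p ≤ 1 := by
      rw [div_le_one hp0]; exact hp
    rw [hedef]; linarith
  have hba : b - a ≤ 2 * D := by
    have h1 := abs_le.mp (hdist a ⟨le_refl a, hab⟩)
    have h2 := abs_le.mp (hdist b ⟨hab, le_refl b⟩)
    linarith [h1.1, h2.2]
  have hpow : (b - a) ^ e ≤ 2 * D ^ e := by
    have h1 : (b - a) ^ e ≤ (2 * D) ^ e :=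
      Real.rpow_le_rpow (by linarith) hba he0
    have h2 : (2 * D) ^ e = 2 ^ e * D ^ e := Real.mul_rpow (by norm_num) hD.le
    have h3 : (2:ℝ) ^ e ≤ 2 := by
      calc (2:ℝ) ^ e ≤ 2 ^ (1:ℝ) := Real.rpow_le_rpow_of_exponent_le one_le_two (by
        have : 0 ≤ 1/p := by positivity
        simp [hedef]; linarith)
      _ = 2 := Real.rpow_one 2
    calc (b - a) ^ e ≤ 2 ^ e * D ^ e := by rw [← h2]; exact h1
    _ ≤ 2 * D ^ e := mul_le_mul_of_nonneg_right h3 (Real.rpow_nonneg hD.le e)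
  have hDse : D ^ s * D ^ e = D ^ ((r:ℝ) - 1/p) := by
    rw [← Real.rpow_natCast D s, ← Real.rpow_add hD]
    congr 1
    have : (s:ℝ) = (r:ℝ) - 1 := by
      have := hs1
      push_cast [← this]
      ring
    rw [this, hedef]; ring
  have hfinal : K ≤ 2 * D ^ ((r:ℝ) - 1/p) * Np := by
    calc K = M * D ^ s := rfl
    _ ≤ ((b - a) ^ e * Np) * D ^ s :=
        mul_le_mul_of_nonneg_right hholder (pow_nonneg hD.le s)
    _ ≤ ((2 * D ^ e) * Np) * D ^ s := by
        refine mul_le_mul_of_nonneg_right (mul_le_mul_of_nonneg_right hpow hNp0)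
          (pow_nonneg hD.le s)
    _ = 2 * (D ^ s * D ^ e) * Np := by ring
    _ = 2 * D ^ ((r:ℝ) - 1/p) * Np := by rw [hDse]
  calc (∫ x in Set.Icc a b, |Q.eval x - q.eval x| ^ p * w x) ^ (1/p)
      ≤ K * W ^ (1/p) := hstep2
    _ ≤ (2 * D ^ ((r:ℝ) - 1/p) * Np) * W ^ (1/p) :=
        mul_le_mul_of_nonneg_right hfinal (Real.rpow_nonneg hW0 _)
    _ = 2 * (A * deltan n z) ^ ((r:ℝ) - 1/p) * Np * W ^ (1/p) := by rw [hDdef]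
end
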